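/- arXiv:0708.3430 — 8 statements merged into one kernel-verified Lean document; each statement's English description precedes it below -/
import Mathlib

section
/- The real matrix (2δ_{ij} − c_{ij})_{i,j∈Ĩ} is symmetric (i.e. c_{ij} = c_{ji} for all i, j) and positive semidefinite: for every function x : Ĩ → ℝ one has Σ_{i,j∈Ĩ} x_i x_j (2δ_{ij} − c_{ij}) ≥ 0. -/
open scoped BigOperators
open CategoryTheory Matrix

noncomputable section
namespace Stmt3Aux
open Polynomial
open scoped ComplexOrder

lemma posSemidef_sum {N α : Type*} [Fintype N] (s : Finset α)
    (f : α → Matrix N N ℂ) (h : ∀ a ∈ s, (f a).PosSemidef) :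
    (∑ a ∈ s, f a).PosSemidef := by
  classical
  induction s using Finset.induction_on with
  | empty => simpa using Matrix.PosSemidef.zero
  | @insert a s' hnot ih =>
    rw [Finset.sum_insert hnot]
    exact (h a (by simp)).add (ih fun b hb => h b (by simp [hb]))

lemma trace_inv_eq_star_trace {N : Type*} [Fintype N] [DecidableEq N]
    (M : Matrix N N ℂ) {n : ℕ} (hn : 0 < n) (hM : M ^ n = 1) :
    Matrix.trace M⁻¹ = star (Matrix.trace M) := by
  have hmul : M * M ^ (n - 1) = 1 := by
    have : M * M ^ (n - 1) = M ^ n := by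
      conv_rhs => rw [show n = 1 + (n - 1) by omega]
      rw [pow_add, pow_one]
    rw [this, hM]
  have hdet : IsUnit M.det := Matrix.isUnit_det_of_right_inverse hmul
  set f : ℕ → Matrix N N ℂ := fun k => (M ^ k)ᴴ * (M ^ k) with hf
  set Q : Matrix N N ℂ := ∑ k ∈ Finset.range n, f k with hQ
  have hf0 : f 0 = 1 := by simp [hf]
  have hfn : f n = 1 := by
    show (M ^ n)ᴴ * M ^ n = 1
    rw [hM]; simp
  have hQpos : Q.PosDef := by
    rw [hQ, show n = (n - 1) + 1 by omega, Finset.sum_range_succ']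
    refine Matrix.PosDef.posSemidef_add ?_ ?_
    · exact posSemidef_sum _ _ fun a _ => Matrix.posSemidef_conjTranspose_mul_self _
    · rw [hf0]; exact Matrix.PosDef.one
  have hQdet : IsUnit Q.det := (Matrix.isUnit_iff_isUnit_det _).mp hQpos.isUnit
  have hfix : Mᴴ * Q * M = Q := by
    have h1 : Mᴴ * Q * M = ∑ k ∈ Finset.range n, f (k + 1) := by
      rw [hQ, Finset.mul_sum, Finset.sum_mul]
      refine Finset.sum_congr rfl fun k _ => ?_
      simp only [hf, pow_succ, Matrix.conjTranspose_mul, Matrix.mul_assoc]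
    have h2 : (∑ k ∈ Finset.range n, f (k + 1)) + f 0 = Q + f n := by
      rw [hQ, ← Finset.sum_range_succ', Finset.sum_range_succ]
    rw [hfn, hf0] at h2
    rw [h1, add_right_cancel h2]
  have hMQ : Mᴴ * Q = Q * M⁻¹ := by
    have := congrArg (fun A => A * M⁻¹) hfix
    simpa [Matrix.mul_assoc, Matrix.mul_nonsing_inv M hdet] using this
  have key : Matrix.trace M⁻¹ = Matrix.trace (Q⁻¹ * Mᴴ * Q) := by
    rw [Matrix.mul_assoc, hMQ, ← Matrix.mul_assoc, Matrix.nonsing_inv_mul _ hQdet, one_mul]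
  rw [key, Matrix.trace_mul_cycle, Matrix.mul_nonsing_inv _ hQdet,
    one_mul, Matrix.trace_conjTranspose]


lemma star_character {G : Type} [Group G] [Fintype G] (V : FDRep ℂ G) (g : G) :
    (starRingEnd ℂ) (V.character g) = V.character g⁻¹ := by
  classical
  let b := Module.finBasis ℂ V
  have hT : ∀ h : G, V.character h = Matrix.trace (LinearMap.toMatrix b b (V.ρ h)) :=
    fun h => LinearMap.trace_eq_matrix_trace ℂ b (V.ρ h)
  have hTpow : (LinearMap.toMatrix b b (V.ρ g)) ^ Fintype.card G = 1 := by
    rw [LinearMap.toMatrix_pow, ← map_pow, pow_card_eq_one, _root_.map_one, LinearMap.toMatrix_one]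
  have hTinv : LinearMap.toMatrix b b (V.ρ g⁻¹) = (LinearMap.toMatrix b b (V.ρ g))⁻¹ := by
    refine (Matrix.inv_eq_left_inv ?_).symm
    rw [← LinearMap.toMatrix_mul, ← _root_.map_mul, inv_mul_cancel, _root_.map_one,
      LinearMap.toMatrix_one]
  rw [hT, hT, hTinv, trace_inv_eq_star_trace _ Fintype.card_pos hTpow]
  rfl

lemma root_pow_eq_one {N : Type*} [Fintype N] [DecidableEq N]
    (M : Matrix N N ℂ) {n : ℕ} (hn : 0 < n) (hM : M ^ n = 1)
    {μ : ℂ} (hμ : μ ∈ M.charpoly.roots) : μ ^ n = 1 := by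
  cases isEmpty_or_nonempty N with
  | inl h =>
    exfalso
    have h1 : M.charpoly = 1 := by
      unfold Matrix.charpoly; exact Matrix.det_isEmpty
    rw [h1, Polynomial.roots_one] at hμ
    simpa using hμ
  | inr h =>
    have hroot : M.charpoly.IsRoot μ := (Polynomial.mem_roots'.mp hμ).2
    have hdet0 : (algebraMap ℂ (Matrix N N ℂ) μ - M).det = 0 := by
      have hmap : (Matrix.charmatrix M).map (Polynomial.evalRingHom μ)
          = algebraMap ℂ (Matrix N N ℂ) μ - M := by
        ext i j
        rcases eq_or_ne i j with rfl | hij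
        · simp [Matrix.charmatrix_apply_eq, Matrix.algebraMap_matrix_apply]
        · simp [Matrix.charmatrix_apply_ne _ _ _ hij, Matrix.algebraMap_matrix_apply, hij]
      calc (algebraMap ℂ (Matrix N N ℂ) μ - M).det
          = ((Matrix.charmatrix M).map (Polynomial.evalRingHom μ)).det := by rw [hmap]
        _ = (Polynomial.evalRingHom μ) (Matrix.charmatrix M).det := by
              rw [RingHom.map_det, RingHom.mapMatrix_apply]
        _ = M.charpoly.eval μ := rfl
        _ = 0 := hroot
    have hnu : ¬ IsUnit (algebraMap ℂ (Matrix N N ℂ) μ - M) := by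
      rw [Matrix.isUnit_iff_isUnit_det, hdet0]
      simp
    have hmem : μ ∈ spectrum ℂ M := spectrum.mem_iff.mpr hnu
    have hpow : μ ^ n ∈ spectrum ℂ (M ^ n) :=
      spectrum.pow_image_subset M n ⟨μ, hmem, rfl⟩
    rw [hM, spectrum.one_eq] at hpow
    simpa using hpow


lemma sl2_trace_facts {G : Type} [Group G] [Fintype G]
    (φ : G →* Matrix.SpecialLinearGroup (Fin 2) ℂ) (g : G) :
    star (Matrix.trace (φ g : Matrix (Fin 2) (Fin 2) ℂ))
        = Matrix.trace (φ g : Matrix (Fin 2) (Fin 2) ℂ)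
      ∧ (Matrix.trace (φ g : Matrix (Fin 2) (Fin 2) ℂ)).re ≤ 2 := by
  set M : Matrix (Fin 2) (Fin 2) ℂ := (φ g : Matrix (Fin 2) (Fin 2) ℂ) with hMdef
  have hMn : M ^ Fintype.card G = 1 := by
    rw [hMdef, ← Matrix.SpecialLinearGroup.coe_pow, ← map_pow, pow_card_eq_one,
      _root_.map_one, Matrix.SpecialLinearGroup.coe_one]
  have hreal : star (Matrix.trace M) = Matrix.trace M := by
    rw [← trace_inv_eq_star_trace M Fintype.card_pos hMn]
    have hinv : M⁻¹ = M.adjugate := by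
      rw [Matrix.inv_def, Matrix.SpecialLinearGroup.det_coe]
      simp
    rw [hinv, Matrix.adjugate_fin_two]
    simp [Matrix.trace_fin_two]
    ring
  refine ⟨hreal, ?_⟩
  have habs : ‖Matrix.trace M‖ ≤ 2 := by
    have hcard : Multiset.card M.charpoly.roots = 2 := by
      rw [(Polynomial.splits_iff_card_roots).mp (IsAlgClosed.splits M.charpoly),
        Matrix.charpoly_natDegree_eq_dim, Fintype.card_fin]
    have hmap : M.charpoly.roots.map norm = Multiset.replicate 2 1 := by
      rw [Multiset.eq_replicate]
      constructor
      · simpa using hcard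
      · intro b hb
        obtain ⟨μ, hμ, rfl⟩ := Multiset.mem_map.mp hb
        have h1 : μ ^ Fintype.card G = 1 := root_pow_eq_one M Fintype.card_pos hMn hμ
        have h2 : ‖μ‖ ^ Fintype.card G = 1 := by
          rw [← norm_pow, h1, norm_one]
        have h0 : (0:ℝ) ≤ ‖μ‖ := norm_nonneg _
        by_contra hne
        rcases lt_or_gt_of_ne hne with hlt | hgt
        · have := pow_lt_one₀ h0 hlt (Fintype.card_pos (α := G)).ne'
          rw [h2] at this; exact lt_irrefl _ this
        · have := one_lt_pow₀ hgt (Fintype.card_pos (α := G)).ne'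
          rw [h2] at this; exact lt_irrefl _ this
    calc ‖Matrix.trace M‖ = ‖(M.charpoly.roots).sum‖ := by
          rw [Matrix.trace_eq_sum_roots_charpoly]
      _ ≤ (M.charpoly.roots.map norm).sum := norm_multiset_sum_le _
      _ = 2 := by
          have : (M.charpoly.roots.map norm) = Multiset.replicate 2 1 := by
            rw [hmap]
          rw [this, Multiset.sum_replicate]
          norm_num
  exact le_trans (Complex.re_le_norm _) habs


open CategoryTheory in
lemma orth {G : Type} [Group G] [Fintype G] {ι : Type} [Fintype ι] [DecidableEq ι]
    (ρ : ι → FDRep ℂ G) (hirr : ∀ i, Simple (ρ i))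
    (hdist : ∀ i j : ι, i ≠ j → IsEmpty (ρ i ≅ ρ j)) (i j : ι) :
    (Fintype.card G : ℂ)⁻¹ * ∑ g : G, (ρ i).character g * (starRingEnd ℂ) ((ρ j).character g)
      = if i = j then 1 else 0 := by
  classical
  haveI := hirr i; haveI := hirr j
  haveI : Nonempty G := ⟨1⟩
  letI : Invertible (Fintype.card G : ℂ) :=
    invertibleOfNonzero (Nat.cast_ne_zero.mpr Fintype.card_ne_zero)
  letI : Invertible (Nat.card G : ℂ) :=
    invertibleOfNonzero (Nat.cast_ne_zero.mpr Nat.card_pos.ne')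
  have key : ⅟(Fintype.card G : ℂ) • ∑ g : G, (ρ i).character g * (ρ j).character g⁻¹
      = if Nonempty (ρ i ≅ ρ j) then (1:ℂ) else 0 := by
    have h0 := FDRep.char_orthonormal (k := ℂ) (G := G) (ρ i) (ρ j)
    rw [invOf_eq_inv, smul_eq_mul, ← Nat.card_eq_fintype_card]
    exact h0
  rw [invOf_eq_inv, smul_eq_mul] at key
  rw [show (∑ g : G, (ρ i).character g * (starRingEnd ℂ) ((ρ j).character g))
      = ∑ g : G, (ρ i).character g * (ρ j).character g⁻¹ from
    Finset.sum_congr rfl fun g _ => by rw [star_character], key]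
  rcases eq_or_ne i j with rfl | hij
  · rw [if_pos ⟨Iso.refl _⟩, if_pos rfl]
  · rw [if_neg (not_nonempty_iff.mpr (hdist i j hij)), if_neg hij]

end Stmt3Aux

end

/-- With `G` a finite subgroup of `SL(2,ℂ)` (via a faithful homomorphism `φ`),
`(ρ_i)_{i∈ι}` a complete set of irreducible complex representations of `G`, and `c_{ij}`
the multiplicity of `ρ_j` in `ρ_i ⊗ σ`, the real matrix `(2δ_{ij} − c_{ij})` is symmetric
(`c_{ij} = c_{ji}`) and positive semidefinite. -/
theorem stmt_3 {G : Type} [Group G] [Fintype G]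
    (φ : G →* Matrix.SpecialLinearGroup (Fin 2) ℂ) (hφ : Function.Injective φ)
    {ι : Type} [Fintype ι] [DecidableEq ι]
    (ρ : ι → FDRep ℂ G) (hirr : ∀ i, Simple (ρ i))
    (hdist : ∀ i j : ι, i ≠ j → IsEmpty (ρ i ≅ ρ j))
    (hcomplete : ∀ V : FDRep ℂ G, Simple V → ∃ i, Nonempty (V ≅ ρ i))
    (c : ι → ι → ℕ)
    (hc : ∀ i j, (c i j : ℂ) = (Fintype.card G : ℂ)⁻¹ *
      ∑ g : G, (ρ i).character g * Matrix.trace (φ g : Matrix (Fin 2) (Fin 2) ℂ) *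
        (starRingEnd ℂ) ((ρ j).character g)) :
    (∀ i j, c i j = c j i) ∧
    (∀ x : ι → ℝ,
      0 ≤ ∑ i, ∑ j, x i * x j * (2 * (if i = j then 1 else 0) - (c i j : ℝ))) := by
  classical
  have htstar : ∀ g : G, (starRingEnd ℂ) (Matrix.trace (φ g : Matrix (Fin 2) (Fin 2) ℂ))
      = Matrix.trace (φ g : Matrix (Fin 2) (Fin 2) ℂ) :=
    fun g => (Stmt3Aux.sl2_trace_facts φ g).1
  have htre : ∀ g : G, (Matrix.trace (φ g : Matrix (Fin 2) (Fin 2) ℂ)).re ≤ 2 :=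
    fun g => (Stmt3Aux.sl2_trace_facts φ g).2
  have hteq : ∀ g : G, (((Matrix.trace (φ g : Matrix (Fin 2) (Fin 2) ℂ)).re : ℂ))
      = Matrix.trace (φ g : Matrix (Fin 2) (Fin 2) ℂ) :=
    fun g => Complex.conj_eq_iff_re.mp (htstar g)
  have horth := Stmt3Aux.orth ρ hirr hdist
  constructor
  · intro i j
    have hC : (c i j : ℂ) = (c j i : ℂ) := by
      calc (c i j : ℂ) = (starRingEnd ℂ) (c i j : ℂ) := by simp
        _ = (Fintype.card G : ℂ)⁻¹ * ∑ g : G, (ρ j).character g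
              * Matrix.trace (φ g : Matrix (Fin 2) (Fin 2) ℂ)
              * (starRingEnd ℂ) ((ρ i).character g) := by
            rw [hc i j, _root_.map_mul, map_inv₀, map_natCast, map_sum]
            congr 1
            refine Finset.sum_congr rfl fun g _ => ?_
            rw [_root_.map_mul, _root_.map_mul, starRingEnd_self_apply, htstar g]
            ring
        _ = (c j i : ℂ) := (hc j i).symm
    exact_mod_cast hC
  · intro x
    have key : ∀ i j : ι, ((x i : ℂ) * (x j : ℂ))
          * (2 * (if i = j then 1 else 0) - (c i j : ℂ))
        = (Fintype.card G : ℂ)⁻¹ * ∑ g : G, ((x i : ℂ) * (x j : ℂ))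
            * ((2 - Matrix.trace (φ g : Matrix (Fin 2) (Fin 2) ℂ))
              * ((ρ i).character g * (starRingEnd ℂ) ((ρ j).character g))) := by
      intro i j
      rw [← horth i j, hc i j]
      rw [show (∑ g : G, ((x i : ℂ) * (x j : ℂ))
            * ((2 - Matrix.trace (φ g : Matrix (Fin 2) (Fin 2) ℂ))
              * ((ρ i).character g * (starRingEnd ℂ) ((ρ j).character g))))
          = ∑ g : G, ((2 * ((x i : ℂ) * (x j : ℂ)))
                * ((ρ i).character g * (starRingEnd ℂ) ((ρ j).character g))
              - ((x i : ℂ) * (x j : ℂ)) * ((ρ i).character g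
                * Matrix.trace (φ g : Matrix (Fin 2) (Fin 2) ℂ)
                * (starRingEnd ℂ) ((ρ j).character g))) from
        Finset.sum_congr rfl fun g _ => by ring]
      rw [Finset.sum_sub_distrib, ← Finset.mul_sum, ← Finset.mul_sum]
      ring
    have swap : (∑ i, ∑ j, ((x i : ℂ) * (x j : ℂ))
          * (2 * (if i = j then 1 else 0) - (c i j : ℂ)))
        = (Fintype.card G : ℂ)⁻¹ * ∑ g : G,
            (2 - Matrix.trace (φ g : Matrix (Fin 2) (Fin 2) ℂ))
            * ((∑ i, (x i : ℂ) * (ρ i).character g)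
              * (starRingEnd ℂ) (∑ i, (x i : ℂ) * (ρ i).character g)) := by
      calc (∑ i, ∑ j, ((x i : ℂ) * (x j : ℂ))
              * (2 * (if i = j then 1 else 0) - (c i j : ℂ)))
          = ∑ i, ∑ j, (Fintype.card G : ℂ)⁻¹ * ∑ g : G, ((x i : ℂ) * (x j : ℂ))
              * ((2 - Matrix.trace (φ g : Matrix (Fin 2) (Fin 2) ℂ))
                * ((ρ i).character g * (starRingEnd ℂ) ((ρ j).character g))) := by
            exact Finset.sum_congr rfl fun i _ => Finset.sum_congr rfl fun j _ => key i j
        _ = (Fintype.card G : ℂ)⁻¹ * ∑ i, ∑ j, ∑ g : G, ((x i : ℂ) * (x j : ℂ))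
              * ((2 - Matrix.trace (φ g : Matrix (Fin 2) (Fin 2) ℂ))
                * ((ρ i).character g * (starRingEnd ℂ) ((ρ j).character g))) := by
            rw [Finset.mul_sum]
            exact Finset.sum_congr rfl fun i _ => (Finset.mul_sum _ _ _).symm
        _ = (Fintype.card G : ℂ)⁻¹ * ∑ g : G, ∑ i, ∑ j, ((x i : ℂ) * (x j : ℂ))
              * ((2 - Matrix.trace (φ g : Matrix (Fin 2) (Fin 2) ℂ))
                * ((ρ i).character g * (starRingEnd ℂ) ((ρ j).character g))) := by
            congr 1
            rw [show (∑ i : ι, ∑ j : ι, ∑ g : G, ((x i : ℂ) * (x j : ℂ))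
                  * ((2 - Matrix.trace (φ g : Matrix (Fin 2) (Fin 2) ℂ))
                    * ((ρ i).character g * (starRingEnd ℂ) ((ρ j).character g))))
                = ∑ i : ι, ∑ g : G, ∑ j : ι, ((x i : ℂ) * (x j : ℂ))
                  * ((2 - Matrix.trace (φ g : Matrix (Fin 2) (Fin 2) ℂ))
                    * ((ρ i).character g * (starRingEnd ℂ) ((ρ j).character g))) from
              Finset.sum_congr rfl fun i _ => Finset.sum_comm]
            exact Finset.sum_comm
        _ = (Fintype.card G : ℂ)⁻¹ * ∑ g : G,
              (2 - Matrix.trace (φ g : Matrix (Fin 2) (Fin 2) ℂ))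
              * ((∑ i, (x i : ℂ) * (ρ i).character g)
                * (starRingEnd ℂ) (∑ i, (x i : ℂ) * (ρ i).character g)) := by
            congr 1
            refine Finset.sum_congr rfl fun g _ => ?_
            have hstarS : (starRingEnd ℂ) (∑ i, (x i : ℂ) * (ρ i).character g)
                = ∑ j, (x j : ℂ) * (starRingEnd ℂ) ((ρ j).character g) := by
              rw [map_sum]
              exact Finset.sum_congr rfl fun j _ => by
                rw [_root_.map_mul, Complex.conj_ofReal]
            rw [hstarS, Finset.sum_mul_sum, Finset.mul_sum]
            refine Finset.sum_congr rfl fun i _ => ?_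
            rw [Finset.mul_sum]
            refine Finset.sum_congr rfl fun j _ => ?_
            ring
    have hreal : Complex.ofReal (∑ i, ∑ j, x i * x j
          * (2 * (if i = j then 1 else 0) - (c i j : ℝ)))
        = Complex.ofReal ((Fintype.card G : ℝ)⁻¹ * ∑ g : G,
            (2 - (Matrix.trace (φ g : Matrix (Fin 2) (Fin 2) ℂ)).re)
            * Complex.normSq (∑ i, (x i : ℂ) * (ρ i).character g)) := by
      have hcast : Complex.ofReal (∑ i, ∑ j, x i * x j
            * (2 * (if i = j then 1 else 0) - (c i j : ℝ)))
          = ∑ i, ∑ j, ((x i : ℂ) * (x j : ℂ))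
              * (2 * (if i = j then 1 else 0) - (c i j : ℂ)) := by
        push_cast [apply_ite (fun r : ℝ => (r : ℂ))]
        refine Finset.sum_congr rfl fun i _ => Finset.sum_congr rfl fun j _ => by ring
      rw [hcast, swap]
      rw [Complex.ofReal_mul, Complex.ofReal_inv, Complex.ofReal_natCast, Complex.ofReal_sum]
      congr 1
      refine Finset.sum_congr rfl fun g _ => ?_
      rw [Complex.ofReal_mul, Complex.mul_conj, ← hteq g]
      push_cast
      simp only [Complex.ofReal_re]
    have := Complex.ofReal_inj.mp hreal
    rw [this]
    have hcnn : (0:ℝ) ≤ (Fintype.card G : ℝ)⁻¹ := by positivity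
    refine mul_nonneg hcnn (Finset.sum_nonneg fun g _ => mul_nonneg ?_ (Complex.normSq_nonneg _))
    linarith [htre g]
end

section
/- Let G be a finite group and H a normal subgroup of G such that the quotient group G/H is cyclic. Let ρ and ρ' be irreducible complex representations of G. Then either the restrictions of ρ and ρ' to H are isomorphic, or these restrictions have no irreducible constituent of H in common, i.e. (1/|H|) Σ_{h∈H} χ_ρ(h) conj(χ_{ρ'}(h)) = 0. -/
open scoped BigOperators
open CategoryTheory Module Polynomial

lemma aux_trace_conj {V : Type} [AddCommGroup V] [Module ℂ V] [FiniteDimensional ℂ V]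
    (f : Module.End ℂ V) {n : ℕ} (hn : n ≠ 0) (hf : f ^ n = 1) :
    (starRingEnd ℂ) (LinearMap.trace ℂ V f) = LinearMap.trace ℂ V (f ^ (n - 1)) := by
  classical
  have hsq : Squarefree (X ^ n - C (1 : ℂ)) :=
    ((separable_X_pow_sub_C (1 : ℂ) (by exact_mod_cast (Nat.cast_ne_zero (R := ℂ)).mpr hn)
      one_ne_zero)).squarefree
  have h0 : (aeval f) (X ^ n - C (1 : ℂ)) = 0 := by
    simp [map_sub, hf]
  have hss : f.IsSemisimple := Module.End.isSemisimple_of_squarefree_aeval_eq_zero hsq h0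
  have hsup : ⨆ μ, f.eigenspace μ = ⊤ := by
    have h1 := f.iSup_maxGenEigenspace_eq_top
    have h2 : ∀ μ : ℂ, f.maxGenEigenspace μ = f.eigenspace μ :=
      fun μ => hss.isFinitelySemisimple.maxGenEigenspace_eq_eigenspace μ
    simpa only [h2] using h1
  have hint : DirectSum.IsInternal (fun μ : ℂ => f.eigenspace μ) :=
    DirectSum.isInternal_submodule_of_iSupIndep_of_iSup_eq_top f.eigenspaces_iSupIndep hsup
  have hN : {μ : ℂ | f.eigenspace μ ≠ ⊥}.Finite := f.finite_hasEigenvalue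
  have hpowapp : ∀ (k : ℕ) (μ : ℂ), ∀ x ∈ f.eigenspace μ, (f ^ k) x = μ ^ k • x := by
    intro k μ x hx
    induction k with
    | zero => simp
    | succ k ih =>
      rw [pow_succ, Module.End.mul_apply, Module.End.mem_eigenspace_iff.mp hx, map_smul, ih,
        smul_smul, pow_succ, mul_comm]
  have hmapf : ∀ μ : ℂ, Set.MapsTo f (f.eigenspace μ) (f.eigenspace μ) := by
    intro μ x hx
    have hx' : x ∈ f.eigenspace μ := hx
    show f x ∈ f.eigenspace μ
    rw [Module.End.mem_eigenspace_iff.mp hx']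
    exact Submodule.smul_mem _ _ hx'
  have hmapg : ∀ μ : ℂ, Set.MapsTo (f ^ (n - 1)) (f.eigenspace μ) (f.eigenspace μ) := by
    intro μ x hx
    have hx' : x ∈ f.eigenspace μ := hx
    show (f ^ (n - 1)) x ∈ f.eigenspace μ
    rw [hpowapp _ μ x hx']
    exact Submodule.smul_mem _ _ hx'
  -- trace formulas
  have htrf : LinearMap.trace ℂ V f
      = ∑ μ ∈ hN.toFinset, μ * (finrank ℂ (f.eigenspace μ) : ℂ) := by
    rw [LinearMap.trace_eq_sum_trace_restrict' hint hN hmapf]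
    refine Finset.sum_congr rfl fun μ _ => ?_
    have : f.restrict (hmapf μ) = μ • (1 : Module.End ℂ (f.eigenspace μ)) := by
      ext ⟨x, hx⟩
      exact Module.End.mem_eigenspace_iff.mp hx
    rw [this, map_smul, LinearMap.trace_one]
    simp [smul_eq_mul]
  have htrg : LinearMap.trace ℂ V (f ^ (n - 1))
      = ∑ μ ∈ hN.toFinset, μ ^ (n - 1) * (finrank ℂ (f.eigenspace μ) : ℂ) := by
    rw [LinearMap.trace_eq_sum_trace_restrict' hint hN hmapg]
    refine Finset.sum_congr rfl fun μ _ => ?_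
    have : (f ^ (n - 1)).restrict (hmapg μ) = (μ ^ (n - 1)) • (1 : Module.End ℂ (f.eigenspace μ)) := by
      ext ⟨x, hx⟩
      exact hpowapp (n - 1) μ x hx
    rw [this, map_smul, LinearMap.trace_one]
    simp [smul_eq_mul]
  rw [htrf, htrg, map_sum]
  refine Finset.sum_congr rfl fun μ hmem => ?_
  -- each eigenvalue is a root of unity
  rw [Set.Finite.mem_toFinset] at hmem
  obtain ⟨v, hv, hv0⟩ := Submodule.exists_mem_ne_zero_of_ne_bot hmem
  have hμn : μ ^ n = 1 := by
    have h1 : (f ^ n) v = μ ^ n • v := hpowapp n μ v hv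
    rw [hf] at h1
    have : (μ ^ n - 1) • v = 0 := by
      rw [sub_smul, one_smul, ← h1]; simp
    rcases smul_eq_zero.mp this with h | h
    · linear_combination h
    · exact absurd h hv0
  have hμ0 : μ ≠ 0 := by
    intro h; rw [h, zero_pow hn] at hμn; exact zero_ne_one hμn
  have hnorm : ‖μ‖ = 1 := by
    have : ‖μ‖ ^ n = 1 := by rw [← norm_pow, hμn, norm_one]
    rcases pow_eq_one_iff_cases.mp this with h | h | h
    · exact absurd h hn
    · exact h
    · nlinarith [norm_nonneg μ, h.1]
  have hconj : (starRingEnd ℂ) μ = μ ^ (n - 1) := by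
    have h1 : μ * (starRingEnd ℂ) μ = 1 := by
      rw [Complex.mul_conj]
      norm_cast
      simp [Complex.normSq_eq_norm_sq, hnorm]
    have h2 : μ * μ ^ (n - 1) = 1 := by
      rw [← pow_succ', Nat.sub_add_cancel (Nat.one_le_iff_ne_zero.mpr hn), hμn]
    exact mul_left_cancel₀ hμ0 (h1.trans h2.symm)
  rw [map_mul, hconj, map_natCast]

lemma aux_char_conj {K : Type} [Group K] [Finite K] (V : FDRep ℂ K) (x : K) :
    (starRingEnd ℂ) (V.character x) = V.character x⁻¹ := by
  have hn : orderOf x ≠ 0 := (orderOf_pos x).ne'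
  have hf : (V.ρ x) ^ orderOf x = 1 := by
    rw [← map_pow, pow_orderOf_eq_one, map_one]
  have hx : x ^ (orderOf x - 1) = x⁻¹ := by
    apply eq_inv_of_mul_eq_one_left
    rw [← pow_succ, Nat.sub_add_cancel (Nat.one_le_iff_ne_zero.mpr hn), pow_orderOf_eq_one]
  calc (starRingEnd ℂ) (V.character x) = LinearMap.trace ℂ V ((V.ρ x) ^ (orderOf x - 1)) :=
        aux_trace_conj (V.ρ x) hn hf
    _ = V.character x⁻¹ := by rw [← map_pow, hx]; rfl

lemma aux_invariant_submodule {K : Type} [Group K] (V : FDRep ℂ K) (hs : Simple V)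
    (p : Submodule ℂ V) (hp : ∀ g : K, ∀ v ∈ p, V.ρ g v ∈ p) : p = ⊥ ∨ p = ⊤ := by
  by_cases hb : p = ⊥
  · exact Or.inl hb
  right
  let rep : Representation ℂ K p :=
    { toFun := fun g => (V.ρ g).restrict (hp g)
      map_one' := by ext x; simp [LinearMap.restrict_apply]
      map_mul' := by intro a b; ext x; simp [LinearMap.restrict_apply] }
  let P : FDRep ℂ K := FDRep.of rep
  let ι : P ⟶ V :=
    { hom := FGModuleCat.ofHom p.subtype
      comm := fun g => by
        ext x
        rfl }
  haveI : Mono ι := by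
    constructor
    intro Z a b w
    ext x
    have hw := congrArg Action.Hom.hom w
    simp only [Action.comp_hom] at hw
    have := DFunLike.congr_fun (congrArg (fun f => f.hom.hom) hw) x
    exact this
  haveI := hs
  have hι0 : ι ≠ 0 := by
    obtain ⟨v, hvp, hv0⟩ := Submodule.exists_mem_ne_zero_of_ne_bot hb
    intro h
    have h' := congrArg Action.Hom.hom h
    rw [Action.zero_hom] at h'
    have := DFunLike.congr_fun (congrArg (fun f => f.hom.hom) h') (⟨v, hvp⟩ : p)
    exact hv0 this
  haveI : IsIso ι := isIso_of_mono_of_nonzero hι0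
  have hsurj : Function.Surjective (p.subtype) := by
    have hji : inv ι ≫ ι = 𝟙 V := IsIso.inv_hom_id ι
    intro v
    refine ⟨(inv ι).hom v, ?_⟩
    have h2 := congrArg Action.Hom.hom hji
    rw [Action.comp_hom, Action.id_hom] at h2
    have h3 := DFunLike.congr_fun (congrArg (fun f => f.hom.hom) h2) v
    exact h3
  rw [← Submodule.range_subtype p]
  exact LinearMap.range_eq_top.mpr hsurj

lemma aux_clifford {G : Type} [Group G] [Fintype G] (H : Subgroup G) (hH : H.Normal)
    (hcyc : IsCyclic (G ⧸ H)) (ρ ρ' : FDRep ℂ G) (hρ : Simple ρ) (hρ' : Simple ρ')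
    (u : ρ' →ₗ[ℂ] ρ) (hu0 : u ≠ 0)
    (huH : ∀ h ∈ H, u ∘ₗ ρ'.ρ h = ρ.ρ h ∘ₗ u) :
    ∃ e : (ρ' ≃ₗ[ℂ] ρ), ∀ h ∈ H, ∀ x, e (ρ'.ρ h x) = ρ.ρ h (e x) := by
  classical
  obtain ⟨gb, hgb⟩ := hcyc.exists_generator
  obtain ⟨g, rfl⟩ := QuotientGroup.mk_surjective gb
  set m := Nat.card (G ⧸ H) with hm
  have hm0 : m ≠ 0 := Nat.card_pos.ne'
  have hgm : g ^ m ∈ H := by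
    have h1 : ((g : G ⧸ H)) ^ m = 1 := pow_card_eq_one'
    have h2 : ((g ^ m : G) : G ⧸ H) = 1 := by
      rw [← h1]; rfl
    exact (QuotientGroup.eq_one_iff _).mp h2
  -- the submodule of H-equivariant maps
  let S₀ : Submodule ℂ (ρ' →ₗ[ℂ] ρ) :=
    { carrier := {w | ∀ h ∈ H, w ∘ₗ ρ'.ρ h = ρ.ρ h ∘ₗ w}
      add_mem' := by
        intro a b ha hb
        intro h hh
        ext x
        have h1 := DFunLike.congr_fun (ha h hh) x
        have h2 := DFunLike.congr_fun (hb h hh) x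
        simp only [LinearMap.comp_apply, LinearMap.add_apply] at h1 h2 ⊢
        rw [h1, h2, map_add]
      zero_mem' := by intro h hh; ext x; simp
      smul_mem' := by
        intro c a ha h hh
        ext x
        have h1 := DFunLike.congr_fun (ha h hh) x
        simp only [LinearMap.comp_apply, LinearMap.smul_apply] at h1 ⊢
        rw [h1, map_smul] }
  have hmemS : ∀ w : ρ' →ₗ[ℂ] ρ, w ∈ S₀ ↔ ∀ h ∈ H, w ∘ₗ ρ'.ρ h = ρ.ρ h ∘ₗ w := fun _ => Iff.rfl
  let T : (ρ' →ₗ[ℂ] ρ) →ₗ[ℂ] (ρ' →ₗ[ℂ] ρ) :=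
    { toFun := fun w => ρ.ρ g ∘ₗ w ∘ₗ ρ'.ρ g⁻¹
      map_add' := by intro a b; ext x; simp
      map_smul' := by intro c a; ext x; simp }
  have hTapp : ∀ (w : ρ' →ₗ[ℂ] ρ) (x : ρ'), T w x = ρ.ρ g (w (ρ'.ρ g⁻¹ x)) := fun _ _ => rfl
  have hT : ∀ w ∈ S₀, T w ∈ S₀ := by
    intro w hw h hh
    have hconj : g⁻¹ * h * g ∈ H := by
      have := hH.conj_mem h hh g⁻¹
      simpa using this
    ext x
    have key1 : ρ'.ρ g⁻¹ (ρ'.ρ h x) = ρ'.ρ (g⁻¹ * h * g) (ρ'.ρ g⁻¹ x) := by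
      rw [← Module.End.mul_apply, ← map_mul, ← Module.End.mul_apply, ← map_mul]
      congr 2
      group
    have key2 : ∀ y, ρ.ρ g (ρ.ρ (g⁻¹ * h * g) y) = ρ.ρ h (ρ.ρ g y) := by
      intro y
      rw [← Module.End.mul_apply, ← map_mul, ← Module.End.mul_apply, ← map_mul]
      congr 2
      group
    have hw1 := DFunLike.congr_fun (hw _ hconj) (ρ'.ρ g⁻¹ x)
    simp only [LinearMap.comp_apply] at hw1 ⊢
    rw [hTapp, hTapp, key1, hw1, key2]
  -- powers of T
  have hTpow : ∀ (k : ℕ) (w : ρ' →ₗ[ℂ] ρ) (x : ρ'),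
      (T ^ k) w x = ρ.ρ (g ^ k) (w (ρ'.ρ ((g ^ k)⁻¹) x)) := by
    intro k
    induction k with
    | zero => intro w x; simp
    | succ k ih =>
      intro w x
      rw [pow_succ, Module.End.mul_apply, ih (T w) x, hTapp]
      rw [← Module.End.mul_apply (ρ.ρ (g^k)) (ρ.ρ g), ← map_mul, ← pow_succ]
      congr 1
      rw [← Module.End.mul_apply (ρ'.ρ g⁻¹), ← map_mul]
      congr 1
      group
  -- restrict T to S₀
  let T' : Module.End ℂ S₀ := T.restrict hT
  haveI : Nontrivial S₀ := by
    refine ⟨⟨u, fun h hh => huH h hh⟩, 0, fun hc => hu0 ?_⟩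
    simpa [Subtype.ext_iff] using hc
  obtain ⟨μ, hμev⟩ := Module.End.exists_eigenvalue T'
  obtain ⟨v, hv⟩ := hμev.exists_hasEigenvector
  obtain ⟨w, hwS⟩ := v
  have hw0 : w ≠ 0 := by
    intro h
    exact hv.2 (by simp [Subtype.ext_iff, h])
  have hTw : T w = μ • w := by
    have := hv.apply_eq_smul
    have h2 := congrArg Subtype.val this
    simpa [T', LinearMap.restrict_apply] using h2
  -- μ^m = 1
  have hμm : μ ^ m = 1 := by
    have h1 := hv.pow_apply m
    have h2 := congrArg Subtype.val h1
    have h3 : (T ^ m) w = μ ^ m • w := by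
      rwa [Module.End.pow_restrict m hT] at h2
    have h4 : (T ^ m) w = w := by
      ext x
      rw [hTpow m w x]
      have hw1 := DFunLike.congr_fun (hwS _ hgm) (ρ'.ρ ((g ^ m)⁻¹) x)
      simp only [LinearMap.comp_apply] at hw1
      rw [← hw1, ← Module.End.mul_apply, ← map_mul, mul_inv_cancel, map_one, Module.End.one_apply]
    rw [h4] at h3
    have h5 : (μ ^ m - 1) • w = 0 := by rw [sub_smul, one_smul, ← h3]; simp
    rcases smul_eq_zero.mp h5 with h | h
    · linear_combination h
    · exact absurd h hw0
  have hμ0 : μ ≠ 0 := by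
    intro h; rw [h, zero_pow hm0] at hμm; exact zero_ne_one hμm
  -- semi-equivariance under g
  have hrel : ∀ x, w (ρ'.ρ g x) = μ⁻¹ • ρ.ρ g (w x) := by
    intro x
    have h1 := DFunLike.congr_fun hTw (ρ'.ρ g x)
    rw [hTapp] at h1
    have h2 : ρ'.ρ g⁻¹ (ρ'.ρ g x) = x := by
      rw [← Module.End.mul_apply, ← map_mul, inv_mul_cancel, map_one, Module.End.one_apply]
    rw [h2] at h1
    simp only [LinearMap.smul_apply] at h1
    rw [eq_comm, inv_smul_eq_iff₀ hμ0]
    exact h1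
  have hrel' : ∀ x, ρ.ρ g (w x) = μ • w (ρ'.ρ g x) := by
    intro x; rw [hrel, smul_inv_smul₀ hμ0]
  -- decomposition of G
  have hdecomp : ∀ x : G, ∃ (k : ℕ) (h : G), h ∈ H ∧ x = g ^ k * h := by
    intro x
    have hx := hgb (QuotientGroup.mk x)
    rw [← mem_powers_iff_mem_zpowers] at hx
    obtain ⟨k, hk⟩ := hx
    refine ⟨k, (g ^ k)⁻¹ * x, ?_, by group⟩
    apply QuotientGroup.eq.mp
    rw [← hk]
    rfl
  -- kernel invariant
  have hkerh : ∀ h ∈ H, ∀ x, w x = 0 → w (ρ'.ρ h x) = 0 := by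
    intro h hh x hx
    have h1 := DFunLike.congr_fun (hwS h hh) x
    simp only [LinearMap.comp_apply] at h1
    rw [h1, hx, map_zero]
  have hkerg : ∀ (k : ℕ) (x : ρ'), w x = 0 → w (ρ'.ρ (g ^ k) x) = 0 := by
    intro k
    induction k with
    | zero => intro x hx; simpa using hx
    | succ k ih =>
      intro x hx
      have : ρ'.ρ (g ^ (k+1)) x = ρ'.ρ g (ρ'.ρ (g ^ k) x) := by
        rw [← Module.End.mul_apply, ← map_mul, ← pow_succ']
      rw [this, hrel, ih x hx, map_zero, smul_zero]
  have hkerinv : ∀ x : G, ∀ v ∈ LinearMap.ker w, ρ'.ρ x v ∈ LinearMap.ker w := by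
    intro x v hv
    obtain ⟨k, h, hh, rfl⟩ := hdecomp x
    rw [LinearMap.mem_ker] at hv ⊢
    have : ρ'.ρ (g ^ k * h) v = ρ'.ρ (g ^ k) (ρ'.ρ h v) := by
      rw [← Module.End.mul_apply, ← map_mul]
    rw [this]
    exact hkerg k _ (hkerh h hh v hv)
  have hker : LinearMap.ker w = ⊥ := by
    rcases aux_invariant_submodule ρ' hρ' (LinearMap.ker w) hkerinv with h | h
    · exact h
    · exact absurd (LinearMap.ker_eq_top.mp h) hw0
  -- range invariant
  have hrgh : ∀ h ∈ H, ∀ y ∈ LinearMap.range w, ρ.ρ h y ∈ LinearMap.range w := by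
    rintro h hh y ⟨z, rfl⟩
    have h1 := DFunLike.congr_fun (hwS h hh) z
    simp only [LinearMap.comp_apply] at h1
    exact ⟨ρ'.ρ h z, h1⟩
  have hrgg : ∀ (k : ℕ), ∀ y ∈ LinearMap.range w, ρ.ρ (g ^ k) y ∈ LinearMap.range w := by
    intro k
    induction k with
    | zero => intro y hy; simpa using hy
    | succ k ih =>
      intro y hy
      have h2 : ρ.ρ (g ^ (k+1)) y = ρ.ρ g (ρ.ρ (g ^ k) y) := by
        rw [← Module.End.mul_apply, ← map_mul, ← pow_succ']
      obtain ⟨z, hz⟩ := ih y hy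
      rw [h2, ← hz, hrel' z]
      exact Submodule.smul_mem _ _ ⟨ρ'.ρ g z, rfl⟩
  have hrginv : ∀ x : G, ∀ y ∈ LinearMap.range w, ρ.ρ x y ∈ LinearMap.range w := by
    intro x y hy
    obtain ⟨k, h, hh, rfl⟩ := hdecomp x
    have : ρ.ρ (g ^ k * h) y = ρ.ρ (g ^ k) (ρ.ρ h y) := by
      rw [← Module.End.mul_apply, ← map_mul]
    rw [this]
    exact hrgg k _ (hrgh h hh y hy)
  have hrange : LinearMap.range w = ⊤ := by
    rcases aux_invariant_submodule ρ hρ (LinearMap.range w) hrginv with h | h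
    · exact absurd (LinearMap.range_eq_bot.mp h) hw0
    · exact h
  refine ⟨LinearEquiv.ofBijective w ⟨LinearMap.ker_eq_bot.mp hker, LinearMap.range_eq_top.mp hrange⟩,
    ?_⟩
  intro h hh x
  have h1 := DFunLike.congr_fun (hwS h hh) x
  simp only [LinearMap.comp_apply] at h1
  exact h1


/-- If `H` is a normal subgroup of a finite group `G` with cyclic quotient
`G/H`, and `ρ, ρ'` are irreducible complex representations of `G`, then either the
restrictions of `ρ` and `ρ'` to `H` are isomorphic, or they have no irreducible
constituent in common, i.e. `|H|⁻¹ Σ_{h∈H} χ_ρ(h) conj(χ_ρ'(h)) = 0`. -/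

theorem stmt_7 {G : Type} [Group G] [Fintype G]
    (H : Subgroup G) [Fintype H] (hH : H.Normal) (hcyc : IsCyclic (G ⧸ H))
    (ρ ρ' : FDRep ℂ G) (hρ : Simple ρ) (hρ' : Simple ρ') :
    Nonempty ((Action.res (FGModuleCat ℂ) H.subtype).obj ρ ≅
        (Action.res (FGModuleCat ℂ) H.subtype).obj ρ') ∨
      (Nat.card H : ℂ)⁻¹ *
        ∑ h : H, ρ.character (h : G) * (starRingEnd ℂ) (ρ'.character (h : G)) = 0 := by
  classical
  by_cases hS : (Nat.card H : ℂ)⁻¹ *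
      ∑ h : H, ρ.character (h : G) * (starRingEnd ℂ) (ρ'.character (h : G)) = 0
  · exact Or.inr hS
  left
  set A : FDRep ℂ H := (Action.res (FGModuleCat ℂ) H.subtype).obj ρ with hA
  set B : FDRep ℂ H := (Action.res (FGModuleCat ℂ) H.subtype).obj ρ' with hB
  haveI : Invertible ((Fintype.card H : ℂ)) :=
    invertibleOfNonzero (Nat.cast_ne_zero.mpr Fintype.card_ne_zero)
  -- rewrite the sum as the average character of linHom
  have hsum : (Nat.card H : ℂ)⁻¹ *
      ∑ h : H, ρ.character (h : G) * (starRingEnd ℂ) (ρ'.character (h : G))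
      = ((finrank ℂ (Representation.invariants (Representation.linHom B.ρ A.ρ))) : ℂ) := by
    have havg := FDRep.average_char_eq_finrank_invariants
      (FDRep.of (Representation.linHom B.ρ A.ρ))
    rw [show (FDRep.of (Representation.linHom B.ρ A.ρ)).ρ = Representation.linHom B.ρ A.ρ from
      FDRep.of_ρ' _] at havg
    have hsums : ∑ h : H, ρ.character (h : G) * (starRingEnd ℂ) (ρ'.character (h : G))
        = ∑ h : H, (FDRep.of (Representation.linHom B.ρ A.ρ)).character h := by
      refine Finset.sum_congr rfl fun h _ => ?_
      have h1 : ρ'.character (h : G) = FDRep.character B h := rfl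
      have h2 : ρ.character (h : G) = FDRep.character A h := rfl
      rw [h1, h2, aux_char_conj B h, FDRep.char_linHom B A h, mul_comm]
    rw [hsums]
    exact havg
  rw [hsum] at hS
  have hfr : finrank ℂ (Representation.invariants (Representation.linHom B.ρ A.ρ)) ≠ 0 := by
    intro h; rw [h] at hS; exact hS (by norm_num)
  haveI : Nontrivial (Representation.invariants (Representation.linHom B.ρ A.ρ)) :=
    Module.finrank_pos_iff.mp (Nat.pos_of_ne_zero hfr)
  obtain ⟨u, hu⟩ := exists_ne (0 : Representation.invariants (Representation.linHom B.ρ A.ρ))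
  have hu0 : u.1 ≠ 0 := by
    intro h
    exact hu (Subtype.ext h)
  have huH : ∀ h ∈ H, u.1 ∘ₗ ρ'.ρ h = ρ.ρ h ∘ₗ u.1 := by
    intro h hh
    have hk := u.2 ⟨h, hh⟩
    rw [Representation.linHom_apply] at hk
    ext x
    have hthis := DFunLike.congr_fun hk (B.ρ (⟨h, hh⟩ : H) x)
    simp only [LinearMap.comp_apply] at hthis ⊢
    have hcancel : B.ρ (⟨h, hh⟩ : H)⁻¹ (B.ρ (⟨h, hh⟩ : H) x) = x := by
      have e1 : B.ρ (⟨h, hh⟩ : H)⁻¹ * B.ρ (⟨h, hh⟩ : H) = 1 := by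
        rw [← map_mul, inv_mul_cancel, map_one]
      exact congrArg (fun f : Module.End ℂ B.V => f x) e1
    rw [hcancel] at hthis
    exact hthis.symm
  obtain ⟨e, he⟩ := aux_clifford H hH hcyc ρ ρ' hρ hρ' u.1 hu0 huH
  have he' : ∀ (k : H) (x : ρ'), e (ρ'.ρ (k : G) x) = ρ.ρ (k : G) (e x) :=
    fun k x => he k.1 k.2 x
  have hsymm : ∀ (k : H) (y : ρ), e.symm (ρ.ρ (k : G) y) = ρ'.ρ (k : G) (e.symm y) := by
    intro k y
    apply e.injective
    rw [he' k (e.symm y), e.apply_symm_apply, e.apply_symm_apply]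
  -- build the isomorphism A ≅ B
  refine ⟨?_⟩
  refine Iso.symm ?_
  refine { hom := ⟨FGModuleCat.ofHom e.toLinearMap, ?_⟩, inv := ⟨FGModuleCat.ofHom e.symm.toLinearMap, ?_⟩, hom_inv_id := ?_, inv_hom_id := ?_ }
  · intro k
    ext x
    exact he' k x
  · intro k
    ext y
    exact hsymm k y
  · ext x
    simp only [Action.comp_hom, Action.id_hom, comp_apply, id_apply, LinearEquiv.coe_coe]
    exact e.symm_apply_apply x
  · ext x
    simp only [Action.comp_hom, Action.id_hom, comp_apply, id_apply, LinearEquiv.coe_coe]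
    exact e.apply_symm_apply x
end

section
/- The map sending x ∈ X to the homomorphism y ↦ ⟨𝔄⁻¹(y), x⟩ mod ℤ (where 𝔄⁻¹(y) ∈ ℚ⊗Y and ⟨,⟩ is extended ℚ-bilinearly) descends to a well-defined group isomorphism X/𝔄'(X) ≅ Hom(Y/𝔄(Y), ℚ/ℤ). -/
/-- Let `Y, X` be finitely generated free abelian groups with a perfect
pairing `p : Y × X → ℤ`, let `𝔄 : Y → Y` have nonzero determinant and let `𝔄' : X → X`
be its adjoint. Then the map sending `x ∈ X` to the homomorphism
`y ↦ ⟨𝔄⁻¹(y), x⟩ mod ℤ` descends to a group isomorphism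
`X/𝔄'(X) ≅ Hom(Y/𝔄(Y), ℚ/ℤ)`.  (Here `⟨𝔄⁻¹(y), x⟩ = ⟨y', x⟩/n ∈ ℚ` whenever
`𝔄(y') = n • y` with `n ≠ 0`; such `n, y'` always exist.) -/
theorem stmt_8 {Y X : Type*} [AddCommGroup Y] [AddCommGroup X]
    [Module.Free ℤ Y] [Module.Finite ℤ Y] [Module.Free ℤ X] [Module.Finite ℤ X]
    (p : Y →ₗ[ℤ] X →ₗ[ℤ] ℤ)
    (hp : Function.Bijective ⇑p) (hp' : Function.Bijective ⇑p.flip)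
    (𝔄 : Y →ₗ[ℤ] Y) (hdet : LinearMap.det 𝔄 ≠ 0)
    (𝔄' : X →ₗ[ℤ] X) (hadj : ∀ (y : Y) (x : X), p y (𝔄' x) = p (𝔄 y) x) :
    (∀ y : Y, ∃ n : ℤ, n ≠ 0 ∧ ∃ y' : Y, 𝔄 y' = n • y) ∧
    ∃ e : (X ⧸ LinearMap.range 𝔄') ≃+ ((Y ⧸ LinearMap.range 𝔄) →+ AddCircle (1 : ℚ)),
      ∀ (x : X) (y : Y) (n : ℤ) (y' : Y), n ≠ 0 → 𝔄 y' = n • y →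
        e (Submodule.Quotient.mk x) (Submodule.Quotient.mk y) =
          (((p y' x : ℚ) / (n : ℚ) : ℚ) : AddCircle (1 : ℚ)) := by
  classical
  set d : ℤ := LinearMap.det 𝔄 with hd
  have hdQ : (d : ℚ) ≠ 0 := Int.cast_ne_zero.mpr hdet
  set b := Module.Free.chooseBasis ℤ Y with hbdef
  set Mat := LinearMap.toMatrix b b 𝔄 with hM
  set B : Y →ₗ[ℤ] Y := Matrix.toLin b b Mat.adjugate with hBdef
  have h1 : ∀ y, 𝔄 (B y) = d • y := by
    intro y
    have key : Matrix.toLin b b (Mat * Mat.adjugate) = Matrix.toLin b b (Mat.det • 1) :=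
      congrArg _ (Matrix.mul_adjugate Mat)
    rw [Matrix.toLin_mul b b b, map_smul, Matrix.toLin_one, hM, Matrix.toLin_toMatrix,
      LinearMap.det_toMatrix] at key
    exact congrArg (fun f : Y →ₗ[ℤ] Y => f y) key
  have h2 : ∀ y, B (𝔄 y) = d • y := by
    intro y
    have key : Matrix.toLin b b (Mat.adjugate * Mat) = Matrix.toLin b b (Mat.det • 1) :=
      congrArg _ (Matrix.adjugate_mul Mat)
    rw [Matrix.toLin_mul b b b, map_smul, Matrix.toLin_one, hM, Matrix.toLin_toMatrix,
      LinearMap.det_toMatrix] at key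
    exact congrArg (fun f : Y →ₗ[ℤ] Y => f y) key
  have hAinj : Function.Injective 𝔄 := by
    intro a c h
    have : d • a = d • c := by rw [← h2, ← h2, h]
    exact smul_right_injective Y hdet this
  refine ⟨fun y => ⟨d, hdet, B y, h1 y⟩, ?_⟩
  -- the quotient map ℚ → ℚ/ℤ
  set mkh : ℚ →+ AddCircle (1:ℚ) := QuotientAddGroup.mk' (AddSubgroup.zmultiples (1:ℚ)) with hmkh
  have hmk : ∀ r : ℚ, mkh r = (r : AddCircle (1:ℚ)) := fun _ => rfl
  have hz : ∀ n : ℤ, ((n : ℚ) : AddCircle (1:ℚ)) = 0 := fun n =>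
    (AddCircle.coe_eq_zero_iff 1).mpr ⟨n, by simp⟩
  have hflipEq : ∀ {x₁ x₂ : X}, (∀ y, p y x₁ = p y x₂) → x₁ = x₂ := by
    intro x₁ x₂ h
    apply hp'.1
    ext y
    exact h y
  -- the bilinear map Φ
  obtain ⟨Φ, hΦ⟩ : ∃ Φ : X →ₗ[ℤ] Y →ₗ[ℤ] AddCircle (1:ℚ),
      ∀ x y, Φ x y = (((p (B y) x : ℚ) / (d:ℚ) : ℚ) : AddCircle (1:ℚ)) := by
    refine ⟨LinearMap.mk₂ ℤ
      (fun x y => (((p (B y) x : ℚ) / (d:ℚ) : ℚ) : AddCircle (1:ℚ))) ?_ ?_ ?_ ?_, fun _ _ => rfl⟩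
    · intro x₁ x₂ y
      have : ((p (B y) (x₁ + x₂) : ℚ) / (d:ℚ)) =
          ((p (B y) x₁ : ℚ) / (d:ℚ)) + ((p (B y) x₂ : ℚ) / (d:ℚ)) := by
        rw [map_add]; push_cast; ring
      rw [this, ← hmk, ← hmk, ← hmk, map_add]
    · intro c x y
      have : ((p (B y) (c • x) : ℚ) / (d:ℚ)) = c • ((p (B y) x : ℚ) / (d:ℚ)) := by
        rw [map_smul]; push_cast [zsmul_eq_mul]; ring
      rw [this, ← hmk, ← hmk, map_zsmul]
    · intro x y₁ y₂
      have : ((p (B (y₁ + y₂)) x : ℚ) / (d:ℚ)) =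
          ((p (B y₁) x : ℚ) / (d:ℚ)) + ((p (B y₂) x : ℚ) / (d:ℚ)) := by
        rw [map_add, LinearMap.map_add₂]; push_cast; ring
      rw [this, ← hmk, ← hmk, ← hmk, map_add]
    · intro c x y
      have : ((p (B (c • y)) x : ℚ) / (d:ℚ)) = c • ((p (B y) x : ℚ) / (d:ℚ)) := by
        rw [map_smul, LinearMap.map_smul₂]
        push_cast [zsmul_eq_mul]; ring
      rw [this, ← hmk, ← hmk, map_zsmul]
  -- Φ x kills range 𝔄
  have hker1 : ∀ x : X, LinearMap.range 𝔄 ≤ LinearMap.ker (Φ x) := by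
    intro x z hz'
    obtain ⟨w, rfl⟩ := hz'
    rw [LinearMap.mem_ker, hΦ, h2]
    have : ((p (d • w) x : ℚ) / (d:ℚ)) = ((p w x : ℚ)) := by
      rw [LinearMap.map_smul₂]; push_cast [zsmul_eq_mul]
      field_simp
    rw [this]
    exact hz (p w x)
  -- descend in the Y variable
  obtain ⟨Ψ, hΨ⟩ : ∃ Ψ : X →ₗ[ℤ] (Y ⧸ LinearMap.range 𝔄) →ₗ[ℤ] AddCircle (1:ℚ),
      ∀ x y, Ψ x (Submodule.Quotient.mk y) = Φ x y := by
    refine ⟨{ toFun := fun x => Submodule.liftQ _ (Φ x) (hker1 x),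
              map_add' := ?_, map_smul' := ?_ }, fun x y => rfl⟩
    · intro x₁ x₂
      apply LinearMap.ext
      intro q
      obtain ⟨y, rfl⟩ := Submodule.Quotient.mk_surjective _ q
      simp [Submodule.liftQ_apply]
    · intro c x
      apply LinearMap.ext
      intro q
      obtain ⟨y, rfl⟩ := Submodule.Quotient.mk_surjective _ q
      simp [Submodule.liftQ_apply]
  -- Ψ kills range 𝔄'
  have hker2 : LinearMap.range 𝔄' ≤ LinearMap.ker Ψ := by
    intro z hz'
    obtain ⟨x, rfl⟩ := hz'
    rw [LinearMap.mem_ker]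
    apply LinearMap.ext
    intro q
    obtain ⟨y, rfl⟩ := Submodule.Quotient.mk_surjective _ q
    rw [hΨ, hΦ, hadj, h1]
    have : ((p (d • y) x : ℚ) / (d:ℚ)) = ((p y x : ℚ)) := by
      rw [LinearMap.map_smul₂]; push_cast [zsmul_eq_mul]
      field_simp
    rw [this, LinearMap.zero_apply]
    exact hz (p y x)
  set Θ : (X ⧸ LinearMap.range 𝔄') →ₗ[ℤ] (Y ⧸ LinearMap.range 𝔄) →ₗ[ℤ] AddCircle (1:ℚ) :=
    Submodule.liftQ _ Ψ hker2 with hΘdef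
  have hΘ : ∀ x y, Θ (Submodule.Quotient.mk x) (Submodule.Quotient.mk y) = Φ x y :=
    fun x y => hΨ x y
  -- injectivity
  have hinj : Function.Injective Θ := by
    rw [← LinearMap.ker_eq_bot, Submodule.eq_bot_iff]
    intro q hq
    obtain ⟨x, rfl⟩ := Submodule.Quotient.mk_surjective _ q
    rw [Submodule.Quotient.mk_eq_zero]
    have hq' : ∀ y : Y, Φ x y = 0 := by
      intro y
      have := congrArg (fun f : (Y ⧸ LinearMap.range 𝔄) →ₗ[ℤ] AddCircle (1:ℚ) =>
        f (Submodule.Quotient.mk y)) hq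
      simpa [hΘ] using this
    have hdiv : ∀ y : Y, d ∣ p (B y) x := by
      intro y
      have h0 : (((p (B y) x : ℚ) / (d:ℚ) : ℚ) : AddCircle (1:ℚ)) = 0 := by
        rw [← hΦ]; exact hq' y
      obtain ⟨m, hm⟩ := (AddCircle.coe_eq_zero_iff (1:ℚ)).mp h0
      refine ⟨m, ?_⟩
      have hm' : (m : ℚ) = (p (B y) x : ℚ) / (d:ℚ) := by
        rw [← hm]; simp [zsmul_eq_mul]
      rw [eq_div_iff hdQ] at hm'
      have : ((p (B y) x : ℚ)) = ((d * m : ℤ) : ℚ) := by push_cast; linarith [hm']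
      exact_mod_cast this
    -- build g : Y →ₗ ℤ with d * g y = p (B y) x
    have hcan : ∀ y : Y, d * (p (B y) x / d) = p (B y) x := fun y =>
      Int.mul_ediv_cancel' (hdiv y)
    obtain ⟨g, hgdef⟩ : ∃ g : Y →ₗ[ℤ] ℤ, ∀ y, g y = p (B y) x / d := by
      refine ⟨{ toFun := fun y => p (B y) x / d, map_add' := ?_, map_smul' := ?_ }, fun _ => rfl⟩
      · intro a c
        apply mul_left_cancel₀ hdet
        rw [hcan, mul_add, hcan, hcan, map_add, LinearMap.map_add₂]
      · intro c a
        dsimp only [RingHom.id_apply, smul_eq_mul]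
        apply mul_left_cancel₀ hdet
        rw [hcan, map_smul, LinearMap.map_smul₂, mul_left_comm, hcan]
        rfl
    obtain ⟨x', hx'⟩ := hp'.2 g
    have hx'' : ∀ y, p y x' = p (B y) x / d := fun y => by
      have := congrArg (fun f : Y →ₗ[ℤ] ℤ => f y) hx'
      simpa [hgdef] using this
    refine ⟨x', hflipEq fun y => ?_⟩
    rw [hadj, hx'' (𝔄 y), h2]
    have hdd : p (d • y) x = d * p y x := by
      rw [LinearMap.map_smul₂]; rfl
    rw [hdd, Int.mul_ediv_cancel_left _ hdet]
  -- surjectivity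
  have hsurj : Function.Surjective Θ := by
    intro h
    set ψ : Y →ₗ[ℤ] AddCircle (1:ℚ) :=
      h ∘ₗ (LinearMap.range 𝔄).mkQ with hψdef
    have hψ0 : ∀ z : Y, ψ (𝔄 z) = 0 := by
      intro z
      have : (LinearMap.range 𝔄).mkQ (𝔄 z) = 0 := by
        rw [Submodule.mkQ_apply, Submodule.Quotient.mk_eq_zero]
        exact ⟨z, rfl⟩
      simp [hψdef, this]
    -- lift ψ to L : Y →ₗ ℚ using the basis
    have hlift : ∀ i, ∃ r : ℚ, (r : AddCircle (1:ℚ)) = ψ (b i) := by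
      intro i
      obtain ⟨r, hr⟩ := QuotientAddGroup.mk_surjective (ψ (b i))
      exact ⟨r, hr⟩
    choose q hq using hlift
    set L : Y →ₗ[ℤ] ℚ := b.constr ℤ q with hLdef
    have hL : ∀ y : Y, ((L y : ℚ) : AddCircle (1:ℚ)) = ψ y := by
      have : mkh.toIntLinearMap ∘ₗ L = ψ := by
        apply b.ext
        intro i
        simp only [LinearMap.coe_comp, Function.comp_apply, hLdef, Module.Basis.constr_basis]
        exact hq i
      intro y
      exact congrArg (fun f : Y →ₗ[ℤ] ℚ ⧸ AddSubgroup.zmultiples (1:ℚ) => f y) this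
    have hint : ∀ y : Y, ∃ m : ℤ, (m : ℚ) = L (𝔄 y) := by
      intro y
      have h0 : ((L (𝔄 y) : ℚ) : AddCircle (1:ℚ)) = 0 := by rw [hL, hψ0]
      obtain ⟨m, hm⟩ := (AddCircle.coe_eq_zero_iff (1:ℚ)).mp h0
      exact ⟨m, by rw [← hm]; simp [zsmul_eq_mul]⟩
    choose m hm using hint
    obtain ⟨g, hgdef⟩ : ∃ g : Y →ₗ[ℤ] ℤ, ∀ y, g y = m y := by
      refine ⟨{ toFun := m, map_add' := ?_, map_smul' := ?_ }, fun _ => rfl⟩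
      · intro a c
        have : ((m (a + c) : ℚ)) = ((m a + m c : ℤ) : ℚ) := by
          rw [hm, map_add]; push_cast; rw [hm, hm, map_add]
        exact_mod_cast this
      · intro c a
        dsimp only [RingHom.id_apply, smul_eq_mul]
        have : ((m (c • a) : ℚ)) = ((c * m a : ℤ) : ℚ) := by
          rw [hm, map_smul, map_smul, zsmul_eq_mul]; push_cast; rw [hm]
        exact_mod_cast this
    obtain ⟨x, hx⟩ := hp'.2 g
    have hx' : ∀ y, ((p y x : ℚ)) = L (𝔄 y) := by
      intro y
      have : p y x = m y := by
        have := congrArg (fun f : Y →ₗ[ℤ] ℤ => f y) hx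
        simpa [hgdef] using this
      rw [this, hm]
    refine ⟨Submodule.Quotient.mk x, ?_⟩
    apply LinearMap.ext
    intro qy
    obtain ⟨y, rfl⟩ := Submodule.Quotient.mk_surjective _ qy
    rw [hΘ, hΦ]
    have : ((p (B y) x : ℚ) / (d:ℚ)) = L y := by
      rw [hx' (B y), h1, map_smul, zsmul_eq_mul]
      push_cast
      field_simp
    rw [this, hL]
    rfl
  -- assemble the equivalence
  set e₀ : (X ⧸ LinearMap.range 𝔄') ≃ₗ[ℤ]
      ((Y ⧸ LinearMap.range 𝔄) →ₗ[ℤ] AddCircle (1:ℚ)) :=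
    LinearEquiv.ofBijective Θ ⟨hinj, hsurj⟩ with he₀
  set e : (X ⧸ LinearMap.range 𝔄') ≃+ ((Y ⧸ LinearMap.range 𝔄) →+ AddCircle (1 : ℚ)) :=
    e₀.toAddEquiv.trans (addMonoidHomLequivInt (B := AddCircle (1:ℚ)) ℤ).symm.toAddEquiv with he
  refine ⟨e, ?_⟩
  intro x y n y' hn hy'
  have hval : e (Submodule.Quotient.mk x) (Submodule.Quotient.mk y)
      = Φ x y := hΘ x y
  rw [hval, hΦ]
  -- now show (p (B y) x)/d = (p y' x)/n
  have hnQ : (n : ℚ) ≠ 0 := Int.cast_ne_zero.mpr hn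
  have hrel : n • B y = d • y' := by
    apply hAinj
    rw [map_smul, map_smul, h1, hy', smul_comm]
  have hrel2 : n * p (B y) x = d * p y' x := by
    have := congrArg (fun z : Y => p z x) hrel
    simpa [LinearMap.map_smul₂, smul_eq_mul] using this
  congr 1
  rw [div_eq_div_iff hdQ hnQ]
  have : ((n * p (B y) x : ℤ) : ℚ) = ((d * p y' x : ℤ) : ℚ) := by exact_mod_cast hrel2
  push_cast at this
  linarith
end

section
/- Let p be a prime number and let (ℚ/ℤ)' denote the subgroup of ℚ/ℤ consisting of the elements whose order is not divisible by p. Then the endomorphism ring of the abelian group (ℚ/ℤ)' is commutative: for any two additive group endomorphisms f, g of (ℚ/ℤ)' one has f ∘ g = g ∘ f. -/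
lemma aux_mem_zmultiples {x y : AddCircle (1:ℚ)} (hx : IsOfFinAddOrder x)
    (h : addOrderOf y ∣ addOrderOf x) : ∃ a : ℤ, y = a • x := by
  set n := addOrderOf x with hn_def
  have hn : 0 < n := hx.addOrderOf_pos
  have hd : 0 < addOrderOf y := by
    rcases Nat.eq_zero_or_pos (addOrderOf y) with h0 | h0
    · rw [h0] at h; exact absurd (Nat.eq_zero_of_zero_dvd h) hn.ne'
    · exact h0
  set d := addOrderOf y with hd_def
  obtain ⟨m, hmn, hm, hxe⟩ := (AddCircle.addOrderOf_eq_pos_iff hn).1 rfl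
  obtain ⟨k, hkd, hk, hye⟩ := (AddCircle.addOrderOf_eq_pos_iff hd).1 rfl
  obtain ⟨c, hc⟩ := h
  obtain ⟨u, v, huv⟩ := (Nat.isCoprime_iff_coprime.2 hm)
  refine ⟨u * (k * c), ?_⟩
  rw [← hye, ← hxe, ← AddCircle.coe_zsmul, eq_comm, ← sub_eq_zero, ← AddCircle.coe_sub,
    AddCircle.coe_eq_zero_iff]
  refine ⟨-((k : ℤ) * c * v), ?_⟩
  have hnq : (n : ℚ) = (d : ℚ) * c := by exact_mod_cast hc
  have huvq : (u : ℚ) * m + v * n = 1 := by exact_mod_cast huv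
  have hd0 : (d : ℚ) ≠ 0 := Nat.cast_ne_zero.2 hd.ne'
  have hn0 : (n : ℚ) ≠ 0 := Nat.cast_ne_zero.2 hn.ne'
  rw [zsmul_eq_mul, zsmul_eq_mul]
  push_cast
  field_simp
  rw [hnq] at huvq ⊢
  linear_combination (-(k:ℚ)*c*d) * huvq


/-- The subgroup `(ℚ/ℤ)'` of `ℚ/ℤ` consisting of the elements whose order is not
divisible by the prime `p`. -/
def primeToPart (p : ℕ) (hp : p.Prime) : AddSubgroup (AddCircle (1 : ℚ)) where
  carrier := {x | ¬ (p ∣ addOrderOf x)}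
  zero_mem' := by
    simp only [Set.mem_setOf_eq, addOrderOf_zero, Nat.dvd_one]
    exact hp.ne_one
  add_mem' := by
    intro a b ha hb hdvd
    have h1 : addOrderOf (a + b) ∣ addOrderOf a * addOrderOf b :=
      (AddCommute.all a b).addOrderOf_add_dvd_mul_addOrderOf
    rcases (Nat.Prime.dvd_mul hp).1 (hdvd.trans h1) with h | h
    · exact ha h
    · exact hb h
  neg_mem' := by
    intro a ha
    simpa only [Set.mem_setOf_eq, addOrderOf_neg] using ha

/-- For a prime `p`, the endomorphism ring of the abelian group `(ℚ/ℤ)'`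
(elements of `ℚ/ℤ` of order prime to `p`) is commutative. -/
theorem stmt_10 (p : ℕ) (hp : p.Prime)
    (f g : primeToPart p hp →+ primeToPart p hp) :
    f.comp g = g.comp f := by
  ext x
  simp only [AddMonoidHom.comp_apply]
  have hx : IsOfFinAddOrder ((x : AddCircle (1:ℚ))) := by
    rw [← addOrderOf_pos_iff]
    rcases Nat.eq_zero_or_pos (addOrderOf (x : AddCircle (1:ℚ))) with h0 | h0
    · exact absurd (h0 ▸ dvd_zero p) x.2
    · exact h0
  have key : ∀ h : primeToPart p hp →+ primeToPart p hp, ∃ a : ℤ, h x = a • x := by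
    intro h
    have hdvd : addOrderOf ((h x : AddCircle (1:ℚ))) ∣ addOrderOf (x : AddCircle (1:ℚ)) := by
      rw [AddSubgroup.addOrderOf_coe, AddSubgroup.addOrderOf_coe]
      exact addOrderOf_map_dvd h x
    obtain ⟨a, ha⟩ := aux_mem_zmultiples hx hdvd
    exact ⟨a, Subtype.ext (by rw [ha]; simp)⟩
  obtain ⟨a, ha⟩ := key g
  obtain ⟨b, hb⟩ := key f
  rw [ha, hb, map_zsmul, map_zsmul, ha, hb, smul_comm]
end

section
/- Let p be a prime number, let (ℚ/ℤ)' be the subgroup of ℚ/ℤ of elements of order prime to p, and let Y be a finitely generated free abelian group. Then for every additive group homomorphism f : (ℚ/ℤ)' ⊗_ℤ Y → (ℚ/ℤ)' and every additive group automorphism κ of (ℚ/ℤ)', one has κ ∘ f ∘ (κ⁻¹ ⊗ id_Y) = f. -/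
open scoped TensorProduct

namespace Stmt11Aux

lemma torsion_eq (n : ℕ) (hn : 0 < n) (z : AddCircle (1:ℚ)) (hz : n • z = 0) :
    ∃ k : ℤ, z = k • (((n:ℚ)⁻¹ : ℚ) : AddCircle (1:ℚ)) := by
  induction z using QuotientAddGroup.induction_on with
  | H q =>
    rw [← AddCircle.coe_nsmul] at hz
    obtain ⟨m, hm⟩ := (AddCircle.coe_eq_zero_iff _).mp hz
    refine ⟨m, ?_⟩
    rw [← AddCircle.coe_zsmul]
    have hn' : (n:ℚ) ≠ 0 := Nat.cast_ne_zero.mpr hn.ne'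
    have hm' : (m:ℚ) = (n:ℚ) * q := by
      simpa [zsmul_eq_mul, nsmul_eq_mul] using hm
    have hq : q = (m:ℤ) • ((n:ℚ)⁻¹) := by
      rw [zsmul_eq_mul, hm']
      field_simp
    rw [hq]

lemma fin_order (z : AddCircle (1:ℚ)) : IsOfFinAddOrder z := by
  induction z using QuotientAddGroup.induction_on with
  | H q =>
    rw [isOfFinAddOrder_iff_nsmul_eq_zero]
    refine ⟨q.den, q.pos, ?_⟩
    rw [← AddCircle.coe_nsmul, AddCircle.coe_eq_zero_iff]
    refine ⟨q.num, ?_⟩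
    rw [zsmul_eq_mul, nsmul_eq_mul, mul_one, mul_comm]
    exact_mod_cast (Rat.num_div_den q ▸ (div_mul_cancel₀ (q.num:ℚ) (by exact_mod_cast q.den_ne_zero) : (q.num:ℚ)/q.den * q.den = q.num)).symm

/-- Endomorphisms of `(ℚ/ℤ)'` commute. -/
lemma comm_aux (p : ℕ) (hp : p.Prime)
    (φ ψ : primeToPart p hp →+ primeToPart p hp) (x : primeToPart p hp) :
    φ (ψ x) = ψ (φ x) := by
  haveI : Fact (0 < (1:ℚ)) := ⟨one_pos⟩
  set n := addOrderOf (x : AddCircle (1:ℚ)) with hn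
  have hfin : IsOfFinAddOrder (x : AddCircle (1:ℚ)) := fin_order _
  have hnpos : 0 < n := hfin.addOrderOf_pos
  have hpn : ¬ p ∣ n := x.2
  have hg0 : addOrderOf ((((n:ℚ)⁻¹ : ℚ)) : AddCircle (1:ℚ)) = n := by
    have := AddCircle.addOrderOf_div_of_gcd_eq_one (p := (1:ℚ)) (m := 1) (n := n)
      hnpos (Nat.gcd_one_left n)
    simpa [one_div] using this
  set g : primeToPart p hp := ⟨(((n:ℚ)⁻¹ : ℚ) : AddCircle (1:ℚ)), by
    show ¬ p ∣ addOrderOf _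
    rw [hg0]; exact hpn⟩ with hgdef
  have hng : n • g = 0 := by
    have h1 : n • (g : AddCircle (1:ℚ)) = 0 := by
      rw [← hg0]; exact addOrderOf_nsmul_eq_zero _
    exact Subtype.ext (by rw [AddSubmonoidClass.coe_nsmul]; exact h1)
  have key : ∀ z : primeToPart p hp, n • z = 0 → ∃ k : ℤ, z = k • g := by
    intro z hz
    obtain ⟨k, hk⟩ := torsion_eq n hnpos (z : AddCircle (1:ℚ)) (by
      have := congrArg (Subtype.val) hz
      simpa using this)
    exact ⟨k, Subtype.ext (by simpa using hk)⟩
  obtain ⟨k, hk⟩ := key x (by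
    apply Subtype.ext
    have : n • (x : AddCircle (1:ℚ)) = 0 := addOrderOf_nsmul_eq_zero _
    simpa using this)
  obtain ⟨a, ha⟩ := key (φ g) (by rw [← map_nsmul, hng, map_zero])
  obtain ⟨b, hb⟩ := key (ψ g) (by rw [← map_nsmul, hng, map_zero])
  rw [hk]
  simp only [map_zsmul, ha, hb, smul_smul]
  congr 1
  ring

end Stmt11Aux

/-- For a prime `p`, every homomorphism `f : (ℚ/ℤ)' ⊗ Y → (ℚ/ℤ)'`
(with `Y` finitely generated free abelian) satisfies `κ ∘ f ∘ (κ⁻¹ ⊗ id) = f`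
for every automorphism `κ` of `(ℚ/ℤ)'`. -/
theorem stmt_11 (p : ℕ) (hp : p.Prime)
    {Y : Type} [AddCommGroup Y] [Module.Free ℤ Y] [Module.Finite ℤ Y]
    (f : (primeToPart p hp) ⊗[ℤ] Y →+ primeToPart p hp)
    (κ : primeToPart p hp ≃+ primeToPart p hp)
    (t : (primeToPart p hp) ⊗[ℤ] Y) :
    κ (f (TensorProduct.map κ.symm.toAddMonoidHom.toIntLinearMap
        (LinearMap.id : Y →ₗ[ℤ] Y) t)) = f t := by
  induction t using TensorProduct.induction_on with
  | zero => simp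
  | tmul x y =>
      have h := Stmt11Aux.comm_aux p hp κ.toAddMonoidHom
        (f.comp (((TensorProduct.mk ℤ (primeToPart p hp) Y).flip y).toAddMonoidHom)) (κ.symm x)
      simpa using h
  | add a b ha hb => simp only [map_add, ha, hb]
end

section
/- Given a root system (Y, X, ⟨,⟩, α̌_i, α_i (i ∈ I)), the Weyl group W, i.e. the subgroup of Aut(X) generated by the reflections s_i : x ↦ x − ⟨α̌_i, x⟩α_i (i ∈ I), is finite. -/
open scoped BigOperators


open Matrix in
private lemma aux_reflect {I : Type*} [Fintype I] [DecidableEq I] (C : Matrix I I ℝ) (c : I → ℝ)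
    (A : Matrix I I ℝ) (hA : ∀ i j, A i j = c i * C i j)
    (hsym : ∀ i j, A i j = A j i) (hdiag : ∀ k, C k k = 2)
    (k : I) (u : I → ℝ) :
    (u - C.mulVec u k • (Pi.single k 1 : I → ℝ)) ⬝ᵥ A.mulVec (u - C.mulVec u k • (Pi.single k 1 : I → ℝ))
      = u ⬝ᵥ A.mulVec u := by
  have hAu : ∀ v : I → ℝ, A.mulVec v k = c k * C.mulVec v k := by
    intro v
    simp only [Matrix.mulVec, dotProduct, hA, Finset.mul_sum, mul_assoc]
  have h1 : Pi.single k 1 ⬝ᵥ A.mulVec u = c k * C.mulVec u k := by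
    rw [single_dotProduct, one_mul, hAu]
  have h2 : u ⬝ᵥ A.mulVec (Pi.single k 1) = c k * C.mulVec u k := by
    rw [Matrix.mulVec_single_one]
    simp only [dotProduct, Matrix.mulVec, dotProduct, Finset.mul_sum, mul_one, Matrix.col_apply]
    refine Finset.sum_congr rfl fun i _ => ?_
    rw [hsym i k, hA]
    ring
  have h3 : Pi.single k 1 ⬝ᵥ A.mulVec (Pi.single k 1) = c k * 2 := by
    rw [single_dotProduct, one_mul, Matrix.mulVec_single_one]
    show A k k = _
    rw [hA, hdiag]
  rw [Matrix.mulVec_sub, Matrix.mulVec_smul, sub_dotProduct, dotProduct_sub,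
    dotProduct_sub, smul_dotProduct, smul_dotProduct,
    dotProduct_smul, dotProduct_smul, h1, h2, h3]
  simp only [smul_eq_mul]
  ring


private lemma aux_int_finite {I : Type*} [Fintype I] (R : ℝ) :
    {m : I → ℤ | ∀ i, |(m i : ℝ)| ≤ R}.Finite := by
  have hsub : {m : I → ℤ | ∀ i, |(m i : ℝ)| ≤ R} ⊆
      Set.pi Set.univ (fun _ : I => {z : ℤ | |(z : ℝ)| ≤ R}) := by
    intro m hm i _
    exact hm i
  refine Set.Finite.subset (Set.Finite.pi fun i => ?_) hsub
  have h2 : {z : ℤ | |(z : ℝ)| ≤ R} ⊆ Set.Icc ⌈-R⌉ ⌊R⌋ := by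
    intro z hz
    rw [Set.mem_setOf_eq, abs_le] at hz
    exact ⟨Int.ceil_le.mpr (by exact_mod_cast hz.1), Int.le_floor.mpr hz.2⟩
  exact (Set.finite_Icc _ _).subset h2

open Matrix in
private lemma aux_bound {I : Type*} [Fintype I] (A : Matrix I I ℝ) (hA : A.PosDef) :
    ∃ ε : ℝ, 0 < ε ∧ ∀ v : I → ℝ, ε * ‖v‖ ^ 2 ≤ v ⬝ᵥ A.mulVec v := by
  have hAv : ∀ v : I → ℝ, v ≠ 0 → 0 < v ⬝ᵥ A.mulVec v := by
    intro v hv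
    simpa using hA.dotProduct_mulVec_pos hv
  by_cases hI : Nonempty I
  · have hfun : (fun v : I → ℝ => v ⬝ᵥ A.mulVec v) =
        fun v => ∑ i, ∑ j, v i * A i j * v j := by
      funext v
      simp [dotProduct, Matrix.mulVec, Finset.mul_sum, mul_assoc]
    have hQc : Continuous fun v : I → ℝ => v ⬝ᵥ A.mulVec v := by
      rw [hfun]
      exact continuous_finset_sum _ fun i _ => continuous_finset_sum _ fun j _ =>
        (((continuous_apply i).mul continuous_const).mul (continuous_apply j))
    have hcs : IsCompact (Metric.sphere (0 : I → ℝ) 1) := isCompact_sphere 0 1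
    have hne : (Metric.sphere (0 : I → ℝ) 1).Nonempty :=
      NormedSpace.sphere_nonempty.mpr zero_le_one
    obtain ⟨v₀, hv₀, hmin⟩ := hcs.exists_isMinOn hne hQc.continuousOn
    have hv₀ne : v₀ ≠ 0 := by
      intro h
      rw [h] at hv₀
      simp at hv₀
    refine ⟨v₀ ⬝ᵥ A.mulVec v₀, hAv v₀ hv₀ne, fun v => ?_⟩
    rcases eq_or_ne v 0 with rfl | hv
    · simp
    · have hnorm : ‖v‖ ≠ 0 := norm_ne_zero_iff.mpr hv
      have hmem : (‖v‖⁻¹ • v) ∈ Metric.sphere (0 : I → ℝ) 1 := by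
        simp [norm_smul, abs_of_nonneg (norm_nonneg v), inv_mul_cancel₀ hnorm]
      have hle := hmin hmem
      rw [Set.mem_setOf_eq] at hle
      have hscale : (‖v‖⁻¹ • v) ⬝ᵥ A.mulVec (‖v‖⁻¹ • v)
          = ‖v‖⁻¹ * ‖v‖⁻¹ * (v ⬝ᵥ A.mulVec v) := by
        rw [Matrix.mulVec_smul, smul_dotProduct, dotProduct_smul]
        simp only [smul_eq_mul]
        ring
      simp only [hscale] at hle
      calc v₀ ⬝ᵥ A.mulVec v₀ * ‖v‖ ^ 2
          ≤ ‖v‖⁻¹ * ‖v‖⁻¹ * (v ⬝ᵥ A.mulVec v) * ‖v‖ ^ 2 :=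
            mul_le_mul_of_nonneg_right hle (sq_nonneg _)
        _ = v ⬝ᵥ A.mulVec v := by
            rw [show ‖v‖⁻¹ * ‖v‖⁻¹ * (v ⬝ᵥ A.mulVec v) * ‖v‖ ^ 2
                = (‖v‖⁻¹ * ‖v‖) ^ 2 * (v ⬝ᵥ A.mulVec v) from by ring,
              inv_mul_cancel₀ hnorm, one_pow, one_mul]
  · refine ⟨1, one_pos, fun v => ?_⟩
    have : v = 0 := funext fun i => absurd ⟨i⟩ hI
    simp [this]



open Matrix

/-- Given a root system `(Y, X, ⟨,⟩, α̌_i, α_i (i ∈ I))`, the Weyl group,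
i.e. the subgroup of `Aut(X)` generated by the reflections
`s_i : x ↦ x − ⟨α̌_i, x⟩ α_i`, is finite. -/
theorem stmt_12 {Y X : Type*} [AddCommGroup Y] [AddCommGroup X]
    [Module.Free ℤ Y] [Module.Finite ℤ Y] [Module.Free ℤ X] [Module.Finite ℤ X]
    (p : Y →ₗ[ℤ] X →ₗ[ℤ] ℤ)
    (hp : Function.Bijective ⇑p) (hp' : Function.Bijective ⇑p.flip)
    {I : Type*} [Fintype I] [DecidableEq I]
    (coroot : I → Y) (root : I → X)
    (h2 : ∀ i, p (coroot i) (root i) = 2)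
    (hoff : ∀ i j, i ≠ j → p (coroot i) (root j) ≤ 0)
    (hpos : ∃ c : I → ℤ, (∀ i, 0 < c i) ∧
      (∀ i j, ((c i * p (coroot i) (root j) : ℤ) : ℝ) =
        ((c j * p (coroot j) (root i) : ℤ) : ℝ)) ∧
      (∀ x : I → ℝ, x ≠ 0 →
        0 < ∑ i, ∑ j, x i * ((c i * p (coroot i) (root j) : ℤ) : ℝ) * x j))
    (s : I → AddAut X) (hs : ∀ i x, s i x = x - p (coroot i) x • root i) :
    (AddSubgroup.closure (Set.range s) : Set (AddAut X)).Finite := by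
  classical
  obtain ⟨c, hc, hsymm, hpd⟩ := hpos
  -- the matrices
  set C : Matrix I I ℝ := Matrix.of fun i j => ((p (coroot i) (root j) : ℤ) : ℝ) with hCdef
  set A : Matrix I I ℝ :=
    Matrix.of fun i j => ((c i : ℝ) * ((p (coroot i) (root j) : ℤ) : ℝ)) with hAdef
  have hAC : ∀ i j, A i j = (c i : ℝ) * C i j := fun i j => rfl
  have hAsym : ∀ i j, A i j = A j i := by
    intro i j
    have h := hsymm i j
    push_cast at h
    exact h
  have hdiagC : ∀ k, C k k = 2 := by
    intro k
    show ((p (coroot k) (root k) : ℤ) : ℝ) = 2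
    rw [h2 k]
    norm_num
  have hQeq : ∀ x : I → ℝ, x ⬝ᵥ A.mulVec x =
      ∑ i, ∑ j, x i * ((c i * p (coroot i) (root j) : ℤ) : ℝ) * x j := by
    intro x
    simp only [dotProduct, Matrix.mulVec, Finset.mul_sum]
    refine Finset.sum_congr rfl fun i _ => Finset.sum_congr rfl fun j _ => ?_
    push_cast
    show x i * (A i j * x j) = _
    rw [hAC, hCdef]
    simp only [Matrix.of_apply]
    ring
  have hApd : A.PosDef := by
    refine Matrix.PosDef.of_dotProduct_mulVec_pos ?_ ?_
    · show Aᴴ = A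
      ext i j
      simp only [Matrix.conjTranspose_apply, star_trivial]
      exact hAsym j i
    · intro x hx
      show 0 < star x ⬝ᵥ A.mulVec x
      rw [star_trivial, hQeq]
      exact hpd x hx
  -- invertibility of C
  have hAdC : A = Matrix.diagonal (fun i => (c i : ℝ)) * C := by
    ext i j
    rw [Matrix.diagonal_mul, hAC]
  have hCdet : IsUnit C.det := by
    refine isUnit_iff_ne_zero.mpr fun h0 => ?_
    have : A.det = 0 := by rw [hAdC, Matrix.det_mul, h0, mul_zero]
    exact hApd.det_pos.ne' this
  -- the coordinate maps
  set g : X → I → ℝ := fun x i => ((p (coroot i) x : ℤ) : ℝ) with hgdef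
  set t : X → I → ℝ := fun x => C⁻¹.mulVec (g x) with htdef
  have hCt : ∀ x, C.mulVec (t x) = g x := by
    intro x
    show C.mulVec (C⁻¹.mulVec (g x)) = g x
    rw [Matrix.mulVec_mulVec, Matrix.mul_nonsing_inv _ hCdet, Matrix.one_mulVec]
  have hts : ∀ k x, t (s k x) = t x - g x k • (Pi.single k 1 : I → ℝ) := by
    intro k x
    have hg : g (s k x) = g x - g x k • C.mulVec (Pi.single k 1 : I → ℝ) := by
      funext j
      show ((p (coroot j) (s k x) : ℤ) : ℝ) = _
      rw [hs k x, map_sub, map_zsmul]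
      push_cast
      simp only [Pi.sub_apply, Pi.smul_apply, Matrix.mulVec_single_one, mul_one, smul_eq_mul]
      show _ = ((p (coroot j) x : ℤ) : ℝ) - ((p (coroot k) x : ℤ) : ℝ) * C j k
      rw [hCdef]
      simp only [Matrix.of_apply]
      push_cast
      ring
    show C⁻¹.mulVec (g (s k x)) = C⁻¹.mulVec (g x) - g x k • (Pi.single k 1 : I → ℝ)
    rw [hg, Matrix.mulVec_sub, Matrix.mulVec_smul, Matrix.mulVec_mulVec,
      Matrix.nonsing_inv_mul _ hCdet, Matrix.one_mulVec]
  have htlat : ∀ (x : X) (m : I → ℤ),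
      t (x + ∑ j, m j • root j) = t x + fun j => (m j : ℝ) := by
    intro x m
    have hg : g (x + ∑ j, m j • root j) = g x + C.mulVec (fun j => (m j : ℝ)) := by
      funext i
      show ((p (coroot i) (x + ∑ j, m j • root j) : ℤ) : ℝ) = _
      rw [map_add, map_sum]
      simp only [map_zsmul, smul_eq_mul]
      push_cast
      simp only [Pi.add_apply, Matrix.mulVec, dotProduct]
      show _ = ((p (coroot i) x : ℤ) : ℝ) + ∑ j, C i j * (m j : ℝ)
      rw [hCdef]
      simp only [Matrix.of_apply]
      congr 1
      exact Finset.sum_congr rfl fun j _ => by ring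
    show C⁻¹.mulVec (g (x + ∑ j, m j • root j)) = C⁻¹.mulVec (g x) + fun j => (m j : ℝ)
    rw [hg, Matrix.mulVec_add, Matrix.mulVec_mulVec, Matrix.nonsing_inv_mul _ hCdet,
      Matrix.one_mulVec]
  -- invariance of the quadratic form
  have hinv : ∀ w ∈ AddSubgroup.closure (Set.range s), ∀ x : X,
      t (w x) ⬝ᵥ A.mulVec (t (w x)) = t x ⬝ᵥ A.mulVec (t x) := by
    intro w hw
    refine AddSubgroup.closure_induction ?_ ?_ ?_ ?_ hw
    · rintro w ⟨k, rfl⟩ x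
      rw [hts k x, show g x k = C.mulVec (t x) k from (congrFun (hCt x) k).symm]
      exact aux_reflect C (fun i => (c i : ℝ)) A hAC hAsym hdiagC k (t x)
    · intro x
      rfl
    · intro a b ha hb iha ihb x
      have : (a + b) x = a (b x) := rfl
      rw [this, iha (b x), ihb x]
    · intro a ha iha x
      have h1 := iha ((-a) x)
      rw [AddAut.apply_neg_self] at h1
      exact h1.symm
  -- lattice displacement
  have hlat : ∀ w ∈ AddSubgroup.closure (Set.range s), ∀ x : X,
      w x - x ∈ Submodule.span ℤ (Set.range root) := by
    intro w hw
    refine AddSubgroup.closure_induction ?_ ?_ ?_ ?_ hw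
    · rintro w ⟨k, rfl⟩ x
      have : s k x - x = (-(p (coroot k) x)) • root k := by
        rw [hs k x, neg_smul]
        abel
      rw [this]
      exact Submodule.smul_mem _ _ (Submodule.subset_span ⟨k, rfl⟩)
    · intro x
      simpa using Submodule.zero_mem _
    · intro a b ha hb iha ihb x
      have : (a + b) x - x = (a (b x) - b x) + (b x - x) := by
        have : (a + b) x = a (b x) := rfl
        rw [this]
        abel
      rw [this]
      exact Submodule.add_mem _ (iha (b x)) (ihb x)
    · intro a ha iha x
      have h1 := iha ((-a) x)
      rw [AddAut.apply_neg_self] at h1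
      have : (-a) x - x = -(x - (-a) x) := by abel
      rw [this]
      exact Submodule.neg_mem _ h1
  -- assemble finiteness
  let b := Module.Free.chooseBasis ℤ X
  obtain ⟨ε, hε, hbd⟩ := aux_bound A hApd
  set T : Module.Free.ChooseBasisIndex ℤ X → Set (I → ℤ) := fun k =>
    {m : I → ℤ | (t (b k) + fun j => (m j : ℝ)) ⬝ᵥ A.mulVec (t (b k) + fun j => (m j : ℝ))
      = t (b k) ⬝ᵥ A.mulVec (t (b k))} with hTdef
  have hTfin : ∀ k, (T k).Finite := by
    intro k
    have hsub : T k ⊆ {m : I → ℤ |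
        ∀ i, |(m i : ℝ)| ≤ Real.sqrt (t (b k) ⬝ᵥ A.mulVec (t (b k)) / ε) + ‖t (b k)‖} := by
      intro m hm
      have hm' : (t (b k) + fun j => ((m j : ℤ) : ℝ)) ⬝ᵥ
          A.mulVec (t (b k) + fun j => ((m j : ℤ) : ℝ)) = t (b k) ⬝ᵥ A.mulVec (t (b k)) := hm
      set u := t (b k) with hu
      set Qu := u ⬝ᵥ A.mulVec u with hQu
      have h1 : ε * ‖u + fun j => ((m j : ℤ) : ℝ)‖ ^ 2 ≤ Qu := by
        rw [← hm']
        exact hbd _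
      have h2 : ‖u + fun j => ((m j : ℤ) : ℝ)‖ ≤ Real.sqrt (Qu / ε) := by
        rw [← Real.sqrt_sq (norm_nonneg (u + fun j => ((m j : ℤ) : ℝ)))]
        apply Real.sqrt_le_sqrt
        rw [le_div_iff₀ hε]
        linarith
      have h3 : ‖fun j => ((m j : ℤ) : ℝ)‖ ≤ Real.sqrt (Qu / ε) + ‖u‖ := by
        have h4 : (fun j => ((m j : ℤ) : ℝ)) = (u + fun j => ((m j : ℤ) : ℝ)) - u := by
          abel
        rw [h4]
        calc ‖(u + fun j => ((m j : ℤ) : ℝ)) - u‖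
            ≤ ‖u + fun j => ((m j : ℤ) : ℝ)‖ + ‖u‖ := norm_sub_le _ _
          _ ≤ _ := by linarith
      intro i
      calc |((m i : ℤ) : ℝ)| = ‖(fun j => ((m j : ℤ) : ℝ)) i‖ := (Real.norm_eq_abs _).symm
        _ ≤ ‖fun j => ((m j : ℤ) : ℝ)‖ := by exact norm_le_pi_norm (fun j => ((m j : ℤ) : ℝ)) i
        _ ≤ _ := h3
    exact (aux_int_finite _).subset hsub
  have hinj : Set.InjOn (fun w : AddAut X => fun k => w (b k))
      ((AddSubgroup.closure (Set.range s) : AddSubgroup (AddAut X)) : Set (AddAut X)) := by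
    intro w1 _ w2 _ h
    have hl : w1.toAddMonoidHom.toIntLinearMap = w2.toAddMonoidHom.toIntLinearMap :=
      b.ext fun k => congrFun h k
    ext x
    exact LinearMap.congr_fun hl x
  refine Set.Finite.of_finite_image ?_ hinj
  refine Set.Finite.subset (Set.Finite.pi fun k =>
    ((hTfin k).image fun m => b k + ∑ j, m j • root j)) ?_
  rintro _ ⟨w, hw, rfl⟩
  rw [Set.mem_pi]
  intro k _
  obtain ⟨m, hm⟩ := (Submodule.mem_span_range_iff_exists_fun ℤ).mp (hlat w hw (b k))
  have hwbk : w (b k) = b k + ∑ j, m j • root j := by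
    rw [hm]
    abel
  refine ⟨m, ?_, hwbk.symm⟩
  have h2' := hinv w hw (b k)
  rw [hwbk, htlat] at h2'
  exact h2'
end

section
/- Given a root system (Y, X, ⟨,⟩, α̌_i, α_i (i ∈ I)), let W ≤ Aut(X) be the subgroup generated by the reflections s_i : x ↦ x − ⟨α̌_i, x⟩α_i and let R = {w(α_i) : w ∈ W, i ∈ I} ⊆ X. Then every element β of R satisfies either β ∈ Σ_{i∈I} ℕα_i or −β ∈ Σ_{i∈I} ℕα_i; that is, R = R⁺ ∪ R⁻ where R⁺ = R ∩ (Σ_i ℕα_i) and R⁻ = −R⁺. -/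
open scoped BigOperators

namespace Stmt13

variable {I : Type*} [Fintype I] [DecidableEq I]

/-- The pairing of the `k`-th coroot against a coordinate vector. -/
def prF (A : I → I → ℤ) (k : I) (v : I → ℤ) : ℤ := ∑ t, A k t * v t

lemma prF_add (A : I → I → ℤ) (k : I) (u v : I → ℤ) :
    prF A k (u + v) = prF A k u + prF A k v := by
  simp [prF, mul_add, Finset.sum_add_distrib]

lemma prF_sub (A : I → I → ℤ) (k : I) (u v : I → ℤ) :
    prF A k (u - v) = prF A k u - prF A k v := by
  simp [prF, mul_sub, Finset.sum_sub_distrib]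

lemma prF_smul (A : I → I → ℤ) (k : I) (c : ℤ) (v : I → ℤ) :
    prF A k (c • v) = c * prF A k v := by
  simp [prF, Finset.mul_sum]; congr 1; funext t; ring

lemma prF_single (A : I → I → ℤ) (k t : I) :
    prF A k (Pi.single t 1) = A k t := by
  simp [prF, Pi.single_apply]

/-- The simple reflection, as an endomorphism of coordinate space. -/
def sg (A : I → I → ℤ) (k : I) : Module.End ℤ (I → ℤ) where
  toFun v := v - prF A k v • Pi.single k 1
  map_add' u v := by
    show (u + v) - prF A k (u + v) • Pi.single k 1 = _
    rw [prF_add]; module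
  map_smul' c v := by
    show (c • v) - prF A k (c • v) • Pi.single k 1 = (RingHom.id ℤ) c • _
    rw [prF_smul]; simp only [RingHom.id_apply]; module

lemma sg_apply (A : I → I → ℤ) (k : I) (v : I → ℤ) :
    sg A k v = v - prF A k v • Pi.single k 1 := rfl

variable {A : I → I → ℤ}

lemma sg_sg (h2 : ∀ t, A t t = 2) (k : I) (v : I → ℤ) :
    sg A k (sg A k v) = v := by
  rw [sg_apply, sg_apply, prF_sub, prF_smul, prF_single, h2]
  module

lemma sg_mul_sg (h2 : ∀ t, A t t = 2) (k : I) : sg A k * sg A k = 1 := by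
  refine LinearMap.ext fun v => ?_
  rw [Module.End.mul_apply, sg_sg h2, Module.End.one_apply]

/-- The product of simple reflections along a word. -/
def pw (A : I → I → ℤ) (L : List I) : Module.End ℤ (I → ℤ) := (L.map (sg A)).prod

@[simp] lemma pw_nil : pw A [] = 1 := rfl

lemma pw_cons (k : I) (L : List I) : pw A (k :: L) = sg A k * pw A L := by
  simp [pw]

lemma pw_append (L M : List I) : pw A (L ++ M) = pw A L * pw A M := by
  simp [pw]

lemma pw_concat (L : List I) (k : I) : pw A (L ++ [k]) = pw A L * sg A k := by
  simp [pw]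

lemma pw_concat_sg (h2 : ∀ t, A t t = 2) (L : List I) (k : I) :
    pw A (L ++ [k]) * sg A k = pw A L := by
  rw [pw_concat, mul_assoc, sg_mul_sg h2, mul_one]


/-! ### Determinant and parity -/

lemma det_sg (h2 : ∀ t, A t t = 2) (k : I) : LinearMap.det (sg A k) = -1 := by
  rw [← LinearMap.det_toMatrix' (sg A k)]
  have hM : LinearMap.toMatrix' (sg A k) =
      Matrix.updateRow 1 k
        (∑ r, (fun r' => (1 : Matrix I I ℤ) k r' - A k r') r • (1 : Matrix I I ℤ) r) := by
    ext t r
    rw [LinearMap.toMatrix'_apply, sg_apply]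
    by_cases htk : t = k
    · subst htk
      simp only [Matrix.updateRow_apply, if_pos rfl, Finset.sum_apply, Pi.smul_apply,
        Matrix.one_apply, smul_eq_mul, sub_mul, Finset.sum_sub_distrib, Pi.sub_apply,
        Pi.smul_apply, Pi.single_apply, mul_ite, mul_one, mul_zero, ite_mul, one_mul, zero_mul]
      simp [prF, Pi.single_apply, mul_ite, Finset.sum_ite_eq', eq_comm]
    · simp only [Matrix.updateRow_apply, if_neg htk, Pi.sub_apply, Pi.smul_apply,
        Pi.single_apply, Matrix.one_apply, smul_eq_mul]
      simp [htk, eq_comm]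
  rw [hM, Matrix.det_updateRow_sum]
  simp [Matrix.one_apply, h2 k]

lemma det_pw (h2 : ∀ t, A t t = 2) (L : List I) :
    LinearMap.det (pw A L) = (-1) ^ L.length := by
  induction L with
  | nil => simp [pw]
  | cons k L ih =>
      rw [pw_cons, Module.End.mul_eq_comp, LinearMap.det_comp, ih, det_sg h2]
      rw [List.length_cons, pow_succ]
      ring

lemma pw_parity (h2 : ∀ t, A t t = 2) {L M : List I} (h : pw A L = pw A M) :
    Even L.length ↔ Even M.length := by
  have hd : ((-1 : ℤ)) ^ L.length = (-1) ^ M.length := by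
    rw [← det_pw h2, ← det_pw h2, h]
  constructor <;> intro he
  · by_contra ho
    rw [Nat.not_even_iff_odd] at ho
    rw [he.neg_one_pow, ho.neg_one_pow] at hd
    norm_num at hd
  · by_contra ho
    rw [Nat.not_even_iff_odd] at ho
    rw [he.neg_one_pow, ho.neg_one_pow] at hd
    norm_num at hd

/-! ### Word length -/

/-- Elements generated by reflections with indices in `J`. -/
def WS (A : I → I → ℤ) (J : Set I) : Set (Module.End ℤ (I → ℤ)) :=
  {w | ∃ L : List I, (∀ x ∈ L, x ∈ J) ∧ pw A L = w}

/-- Minimal word length. -/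
noncomputable def ll (A : I → I → ℤ) (J : Set I) (w : Module.End ℤ (I → ℤ)) : ℕ :=
  sInf {n | ∃ L : List I, (∀ x ∈ L, x ∈ J) ∧ L.length = n ∧ pw A L = w}

lemma ll_le {J : Set I} {L : List I} (hL : ∀ x ∈ L, x ∈ J) {w} (hw : pw A L = w) :
    ll A J w ≤ L.length :=
  Nat.sInf_le ⟨L, hL, rfl, hw⟩

lemma ll_spec {J : Set I} {w} (hw : w ∈ WS A J) :
    ∃ L : List I, (∀ x ∈ L, x ∈ J) ∧ L.length = ll A J w ∧ pw A L = w := by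
  obtain ⟨L, hL, hw⟩ := hw
  have hne : {n | ∃ L : List I, (∀ x ∈ L, x ∈ J) ∧ L.length = n ∧ pw A L = w}.Nonempty :=
    ⟨L.length, L, hL, rfl, hw⟩
  exact Nat.sInf_mem hne

lemma WS_mul {J : Set I} {u v} (hu : u ∈ WS A J) (hv : v ∈ WS A J) : u * v ∈ WS A J := by
  obtain ⟨L, hL, hu⟩ := hu
  obtain ⟨M, hM, hv⟩ := hv
  refine ⟨L ++ M, fun x hx => ?_, by rw [pw_append, hu, hv]⟩
  rcases List.mem_append.mp hx with h | h
  exacts [hL x h, hM x h]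

lemma WS_sg {J : Set I} {k : I} (hk : k ∈ J) : sg A k ∈ WS A J :=
  ⟨[k], by simpa, by simp [pw, List.prod]⟩

lemma WS_mono {J J' : Set I} (h : J ⊆ J') {w} (hw : w ∈ WS A J) : w ∈ WS A J' := by
  obtain ⟨L, hL, hw⟩ := hw
  exact ⟨L, fun x hx => h (hL x hx), hw⟩

lemma ll_mono {J J' : Set I} (h : J ⊆ J') {w} (hw : w ∈ WS A J) :
    ll A J' w ≤ ll A J w := by
  obtain ⟨L, hL, hlen, hw⟩ := ll_spec hw
  rw [← hlen]
  exact ll_le (fun x hx => h (hL x hx)) hw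

lemma ll_mul {J : Set I} {u v} (hu : u ∈ WS A J) (hv : v ∈ WS A J) :
    ll A J (u * v) ≤ ll A J u + ll A J v := by
  obtain ⟨L, hL, hlenL, hu⟩ := ll_spec hu
  obtain ⟨M, hM, hlenM, hv⟩ := ll_spec hv
  calc ll A J (u * v) ≤ (L ++ M).length :=
        ll_le (fun x hx => by rcases List.mem_append.mp hx with h | h; exacts [hL x h, hM x h])
          (by rw [pw_append, hu, hv])
    _ = ll A J u + ll A J v := by simp [hlenL, hlenM]

lemma ll_one {J : Set I} : ll A J 1 = 0 :=
  Nat.le_zero.mp (ll_le (L := []) (by simp) (by simp))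

lemma ll_eq_zero {J : Set I} {w} (hw : w ∈ WS A J) (h : ll A J w = 0) : w = 1 := by
  obtain ⟨L, _, hlen, hw⟩ := ll_spec hw
  rw [h, List.length_eq_zero_iff] at hlen
  rw [← hw, hlen, pw_nil]

lemma sg_ne_one (h2 : ∀ t, A t t = 2) (k : I) : sg A k ≠ 1 := by
  intro h
  have := congrArg (fun f : Module.End ℤ (I → ℤ) => f (Pi.single k 1) k) h
  simp [sg_apply, prF_single, h2] at this

lemma ll_sg (h2 : ∀ t, A t t = 2) {J : Set I} {k : I} (hk : k ∈ J) :
    ll A J (sg A k) = 1 := by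
  have h1 : ll A J (sg A k) ≤ 1 := ll_le (L := [k]) (by simpa) (by simp [pw, List.prod])
  have h0 : ll A J (sg A k) ≠ 0 := fun h => sg_ne_one h2 k (ll_eq_zero (WS_sg hk) h)
  omega

lemma ll_mul_sg_ne (h2 : ∀ t, A t t = 2) {J : Set I} {w} (hw : w ∈ WS A J) {k : I}
    (hk : k ∈ J) : ll A J (w * sg A k) ≠ ll A J w := by
  obtain ⟨L, hL, hlenL, hpwL⟩ := ll_spec (WS_mul hw (WS_sg hk))
  obtain ⟨M, hM, hlenM, hpwM⟩ := ll_spec hw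
  intro heq
  have hpar : pw A (M ++ [k]) = pw A L := by
    rw [pw_concat, hpwM, hpwL]
  have := pw_parity h2 hpar
  simp only [List.length_append, List.length_singleton, hlenL, hlenM, heq] at this
  rw [Nat.even_add_one] at this
  tauto

lemma ll_dich (h2 : ∀ t, A t t = 2) {J : Set I} {w} (hw : w ∈ WS A J) {k : I} (hk : k ∈ J) :
    ll A J (w * sg A k) = ll A J w + 1 ∨ ll A J w = ll A J (w * sg A k) + 1 := by
  have h1 : ll A J (w * sg A k) ≤ ll A J w + 1 := by
    have := ll_mul hw (WS_sg hk)
    rwa [ll_sg h2 hk] at this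
  have h2' : ll A J w ≤ ll A J (w * sg A k) + 1 := by
    have h := ll_mul (WS_mul hw (WS_sg hk)) (WS_sg hk)
    rw [mul_assoc, sg_mul_sg h2, mul_one, ll_sg h2 hk] at h
    exact h
  have := ll_mul_sg_ne h2 hw hk
  omega


/-! ### Rank 2 combinatorics -/

/-- One step of the rank-2 coordinate action. -/
def stp (a b p q : ℤ) (c : Bool) (z : ℤ × ℤ) : ℤ × ℤ :=
  if c then (-z.1 - a * z.2 - p, z.2) else (z.1, -z.2 - b * z.1 - q)

/-- The rank-2 coordinate action of a word. -/
def run (a b p q : ℤ) (B : List Bool) (z : ℤ × ℤ) : ℤ × ℤ := B.foldr (stp a b p q) z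

@[simp] lemma run_nil (a b p q : ℤ) (z : ℤ × ℤ) : run a b p q [] z = z := rfl

@[simp] lemma run_cons (a b p q : ℤ) (c : Bool) (B : List Bool) (z : ℤ × ℤ) :
    run a b p q (c :: B) z = stp a b p q c (run a b p q B z) := rfl

lemma run_append (a b p q : ℤ) (B C : List Bool) (z : ℤ × ℤ) :
    run a b p q (B ++ C) z = run a b p q B (run a b p q C z) := by
  simp [run, List.foldr_append]

/-- Alternating word of given length and starting letter. -/
def altB : Bool → ℕ → List Bool
  | _, 0 => []
  | s, n + 1 => s :: altB (!s) n

@[simp] lemma altB_zero (s : Bool) : altB s 0 = [] := rfl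

@[simp] lemma altB_succ (s : Bool) (n : ℕ) : altB s (n + 1) = s :: altB (!s) n := rfl

@[simp] lemma altB_length (s : Bool) (n : ℕ) : (altB s n).length = n := by
  induction n generalizing s with
  | zero => rfl
  | succ n ih => simp [ih]

/-- Flip a boolean `n` times. -/
def fl (n : ℕ) (s : Bool) : Bool := if Even n then s else !s

@[simp] lemma fl_zero (s : Bool) : fl 0 s = s := rfl

lemma fl_succ (n : ℕ) (s : Bool) : fl (n + 1) s = !(fl n s) := by
  simp only [fl, Nat.even_add_one]
  by_cases h : Even n <;> simp [h]

lemma fl_not (n : ℕ) (s : Bool) : fl n (!s) = !(fl n s) := by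
  simp only [fl]; by_cases h : Even n <;> simp [h]

lemma altB_add (s : Bool) (k r : ℕ) : altB s (k + r) = altB s k ++ altB (fl k s) r := by
  induction k generalizing s with
  | zero => simp
  | succ k ih =>
      have : k + 1 + r = (k + r) + 1 := by omega
      rw [this, altB_succ, altB_succ, ih (!s), fl_not, ← fl_succ, List.cons_append]

lemma altB_concat (s : Bool) (k : ℕ) : altB s (k + 1) = altB s k ++ [fl k s] := by
  rw [altB_add s k 1]; rfl

lemma altB_getLast (s : Bool) (k : ℕ) : (altB s (k + 1)).getLast? = some (fl k s) := by
  rw [altB_concat, List.getLast?_concat]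

lemma alt_canon : ∀ (B : List Bool), B.Chain' (· ≠ ·) →
    ∀ s, B.head? = some s → B = altB s B.length := by
  intro B
  induction B with
  | nil => intro _ s h; simp at h
  | cons c B ih =>
      intro hch s hs
      simp only [List.head?_cons, Option.some.injEq] at hs
      subst hs
      rw [List.length_cons, altB_succ]
      congr 1
      cases B with
      | nil => rfl
      | cons d T =>
          have hcd : c ≠ d := (List.isChain_cons_cons.mp hch).1
          have hd : (!c) = d := by cases c <;> cases d <;> simp_all
          rw [hd]
          exact ih (List.isChain_cons_cons.mp hch).2 d rfl

/-- Starting coordinates. -/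
def ini (s : Bool) : ℤ × ℤ := if s then (1, 0) else (0, 1)

variable (A) in
/-- Word reduction to an alternating word. -/
lemma reduceB (h2 : ∀ t, A t t = 2) (w2 : Bool → I) : ∀ n (B : List Bool), B.length = n →
    ∃ C : List Bool, C.Chain' (· ≠ ·) ∧ C.length ≤ B.length ∧
      pw A (C.map w2) = pw A (B.map w2) := by
  intro n
  induction n using Nat.strong_induction_on with
  | _ n IH =>
    intro B hBn
    match B with
    | [] => exact ⟨[], List.isChain_nil, le_refl _, rfl⟩
    | [c] => exact ⟨[c], List.isChain_singleton c, le_refl _, rfl⟩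
    | c1 :: c2 :: T =>
      by_cases hc : c1 = c2
      · subst hc
        obtain ⟨C, hch, hle, hpw⟩ := IH T.length (by simp [← hBn]) T rfl
        refine ⟨C, hch, by simp; omega, ?_⟩
        rw [hpw]
        simp only [List.map_cons, pw_cons, ← mul_assoc, sg_mul_sg h2, one_mul]
      · obtain ⟨C, hch, hle, hpw⟩ := IH (c2 :: T).length (by simp [← hBn]) (c2 :: T) rfl
        match C, hch, hle, hpw with
        | [], _, _, hpw =>
            refine ⟨[c1], List.isChain_singleton c1, by simp, ?_⟩
            simp only [List.map_cons, pw_cons, List.map_nil, pw_nil] at hpw ⊢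
            rw [← hpw, mul_one]
        | d :: C', hch, hle, hpw =>
            by_cases hdc : d = c1
            · refine ⟨C', hch.tail, by simp at hle ⊢; omega, ?_⟩
              have hstep : pw A ((c1 :: c2 :: T).map w2) = sg A (w2 c1) * pw A ((c2 :: T).map w2) := by
                simp [List.map_cons, pw_cons]
              rw [hstep, ← hpw, hdc]
              simp only [List.map_cons, pw_cons, ← mul_assoc, sg_mul_sg h2, one_mul]
            · refine ⟨c1 :: d :: C', List.isChain_cons_cons.mpr ⟨fun h => hdc h.symm, hch⟩,
                by simp at hle ⊢; omega, ?_⟩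
              simp only [List.map_cons, pw_cons] at hpw ⊢
              rw [hpw]


@[simp] lemma pw_singleton (k : I) : pw A [k] = sg A k := by
  simp [pw]

/-! ### The bridge between words and rank-2 coordinates -/

lemma bridge (h2 : ∀ t, A t t = 2) {i j : I} (hij : i ≠ j) (B : List Bool) (v : I → ℤ)
    (x y : ℤ) :
    pw A (B.map fun c => cond c i j) (v + x • Pi.single i 1 + y • Pi.single j 1) =
      v + (run (A i j) (A j i) (prF A i v) (prF A j v) B (x, y)).1 • Pi.single i 1 +
        (run (A i j) (A j i) (prF A i v) (prF A j v) B (x, y)).2 • Pi.single j 1 := by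
  induction B with
  | nil => simp
  | cons c B ih =>
      rw [List.map_cons, pw_cons, Module.End.mul_apply, ih, run_cons]
      cases c
      · show sg A j _ = _
        rw [sg_apply, prF_add, prF_add, prF_smul, prF_smul, prF_single, prF_single, h2 j]
        simp only [stp, Bool.false_eq_true, if_false]
        module
      · show sg A i _ = _
        rw [sg_apply, prF_add, prF_add, prF_smul, prF_smul, prF_single, prF_single, h2 i]
        simp only [stp, if_true]
        module

lemma inico (h2 : ∀ t, A t t = 2) {i j : I} (hij : i ≠ j) (B : List Bool) (s : Bool) :
    pw A (B.map fun c => cond c i j) (Pi.single (cond s i j) 1) =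
      (run (A i j) (A j i) 0 0 B (ini s)).1 • Pi.single i 1 +
      (run (A i j) (A j i) 0 0 B (ini s)).2 • Pi.single j 1 := by
  have h0 : prF A i (0 : I → ℤ) = 0 := by simp [prF]
  have h0' : prF A j (0 : I → ℤ) = 0 := by simp [prF]
  cases s
  · have hb := bridge h2 hij B (0 : I → ℤ) 0 1
    rw [h0, h0'] at hb
    simpa [ini] using hb
  · have hb := bridge h2 hij B (0 : I → ℤ) 1 0
    rw [h0, h0'] at hb
    simpa [ini] using hb

lemma braid_pw (h2 : ∀ t, A t t = 2) {i j : I} (hij : i ≠ j) (m : ℕ)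
    (hbraid : ∀ p q z, run (A i j) (A j i) p q (altB true m) z
      = run (A i j) (A j i) p q (altB false m) z) :
    pw A ((altB true m).map fun c => cond c i j)
      = pw A ((altB false m).map fun c => cond c i j) := by
  refine LinearMap.ext fun v => ?_
  have h1 := bridge h2 hij (altB true m) (v - v i • Pi.single i 1 - v j • Pi.single j 1)
    (v i) (v j)
  have h2' := bridge h2 hij (altB false m) (v - v i • Pi.single i 1 - v j • Pi.single j 1)
    (v i) (v j)
  have hv : (v - v i • Pi.single i 1 - v j • Pi.single j 1) + v i • Pi.single i 1
      + v j • Pi.single j 1 = v := by module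
  rw [hv] at h1 h2'
  rw [h1, h2', hbraid]


lemma rank2core (h2 : ∀ t, A t t = 2) {i j : I} (hij : i ≠ j) (m : ℕ) (hm : 1 ≤ m)
    (hbraid : ∀ p q z, run (A i j) (A j i) p q (altB true m) z
      = run (A i j) (A j i) p q (altB false m) z)
    (hposW : ∀ n, n < m → ∀ s0 s : Bool, (altB s0 n).getLast? ≠ some s →
      0 ≤ (run (A i j) (A j i) 0 0 (altB s0 n) (ini s)).1 ∧
      0 ≤ (run (A i j) (A j i) 0 0 (altB s0 n) (ini s)).2)
    {u} (hu : u ∈ WS A {i, j}) (hasc : ll A {i, j} u < ll A {i, j} (u * sg A i)) :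
    ∃ X Y : ℤ, 0 ≤ X ∧ 0 ≤ Y ∧ u (Pi.single i 1) = X • Pi.single i 1 + Y • Pi.single j 1 := by
  have hbp : ∀ s0 : Bool, pw A ((altB s0 m).map fun c => cond c i j)
      = pw A ((altB (!s0) m).map fun c => cond c i j) := by
    intro s0
    cases s0
    · exact (braid_pw h2 hij m hbraid).symm
    · exact braid_pw h2 hij m hbraid
  have claimB : ∀ n (B : List Bool), B.length = n → ∀ s : Bool,
      (∃ X Y : ℤ, 0 ≤ X ∧ 0 ≤ Y ∧
        pw A (B.map fun c => cond c i j) (Pi.single (cond s i j) 1)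
          = X • Pi.single i 1 + Y • Pi.single j 1) ∨
      (∃ B' : List Bool, B'.length ≤ B.length ∧
        pw A (B'.map fun c => cond c i j)
          = pw A (B.map fun c => cond c i j) * sg A (cond s i j)) := by
    intro n
    induction n using Nat.strong_induction_on with
    | _ n IH =>
      intro B hBn s
      obtain ⟨C, hch, hle, hpwC⟩ := reduceB A h2 (fun c => cond c i j) B.length B rfl
      by_cases hCB : C.length < B.length
      · rcases IH C.length (hBn ▸ hCB) C rfl s with h | ⟨B', hB'l, hB'⟩
        · left; rwa [hpwC] at h
        · right; exact ⟨B', le_trans hB'l (le_of_lt hCB), by rw [hB', hpwC]⟩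
      · have hCBe : C.length = B.length := le_antisymm hle (not_lt.mp hCB)
        obtain ⟨s0, hcanon⟩ : ∃ s0, C = altB s0 C.length := by
          cases hC : C with
          | nil => exact ⟨true, by simp [hC]⟩
          | cons c C'' =>
              exact ⟨c, by rw [← hC]; exact alt_canon C hch c (by rw [hC]; rfl)⟩
        by_cases hlast : C.getLast? = some s
        · -- the word ends with the letter s : drop it
          right
          have hCne : C ≠ [] := by intro h; rw [h] at hlast; simp at hlast
          have hsplit : C = C.dropLast ++ [s] := by
            conv_lhs => rw [← List.dropLast_append_getLast hCne]
            rw [List.getLast?_eq_getLast hCne, Option.some.injEq] at hlast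
            rw [hlast]
          have hkey : pw A (C.dropLast.map fun c => cond c i j)
              = pw A (C.map fun c => cond c i j) * sg A (cond s i j) := by
            conv_rhs => rw [hsplit]
            rw [List.map_append, List.map_cons, List.map_nil, pw_concat_sg h2]
          refine ⟨C.dropLast, ?_, by rw [hkey, hpwC]⟩
          rw [← hCBe]
          exact le_trans ((List.length_dropLast (xs := C)) ▸ Nat.sub_le _ _) (le_refl _)
        · by_cases hnm : C.length < m
          · -- short word not ending in s : explicitly positive
            left
            have hp := hposW C.length hnm s0 s (by rw [← hcanon]; exact hlast)
            refine ⟨_, _, hp.1, hp.2, ?_⟩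
            rw [← hpwC]
            conv_lhs => rw [hcanon]
            exact inico h2 hij _ s
          · by_cases hem : C.length = m
            · -- braid partner ends with s : drop its last letter
              right
              obtain ⟨m', rfl⟩ : ∃ m', m = m' + 1 := ⟨m - 1, by omega⟩
              have hlastC : (altB s0 (m' + 1)).getLast? ≠ some s := by
                rw [← hem, ← hcanon]; exact hlast
              rw [altB_getLast] at hlastC
              have hfl : fl m' s0 = !s := by
                have hne : fl m' s0 ≠ s := fun h => hlastC (congrArg some h)
                revert hne
                cases fl m' s0 <;> cases s <;> decide
              have hlastP : (altB (!s0) (m' + 1)).getLast? = some s := by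
                rw [altB_getLast, fl_not, hfl]
                simp
              set P := altB (!s0) (m' + 1) with hP
              have hPne : P ≠ [] := by
                intro h
                have := altB_length (!s0) (m' + 1)
                rw [← hP, h] at this
                simp at this
              have hsplit : P = P.dropLast ++ [s] := by
                conv_lhs => rw [← List.dropLast_append_getLast hPne]
                rw [List.getLast?_eq_getLast hPne, Option.some.injEq] at hlastP
                rw [hlastP]
              have hCP : pw A (C.map fun c => cond c i j) = pw A (P.map fun c => cond c i j) := by
                rw [hcanon, hem]
                exact hbp s0
              have hkey : pw A (P.dropLast.map fun c => cond c i j)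
                  = pw A (C.map fun c => cond c i j) * sg A (cond s i j) := by
                rw [hCP]
                conv_rhs => rw [hsplit]
                rw [List.map_append, List.map_cons, List.map_nil, pw_concat_sg h2]
              refine ⟨P.dropLast, ?_, by rw [hkey, hpwC]⟩
              have hPlen : P.length = m' + 1 := by rw [hP, altB_length]
              rw [← hCBe, hem]
              rw [List.length_dropLast, hPlen]
              omega
            · -- long word : shorten using the braid relation
              have hgt : m < C.length := by omega
              obtain ⟨m', rfl⟩ : ∃ m', m = m' + 1 := ⟨m - 1, by omega⟩
              obtain ⟨r', hr'⟩ : ∃ r', C.length = (m' + 1) + (r' + 1) := by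
                refine ⟨C.length - m' - 2, by omega⟩
              set t := fl (m' + 1) s0 with ht
              have hsplit : C = altB s0 (m' + 1) ++ altB t (r' + 1) := by
                rw [hcanon, hr', altB_add]
              -- the braided partner of the first block ends with the letter t
              have hblock : altB (!s0) (m' + 1) = altB (!s0) m' ++ [t] := by
                rw [altB_concat, fl_not, ht, fl_succ]
              have hblock2 : altB t (r' + 1) = t :: altB (!t) r' := rfl
              have hDeq : pw A (C.map fun c => cond c i j)
                  = pw A ((altB (!s0) m' ++ altB (!t) r').map fun c => cond c i j) := by
                have e1 : pw A (C.map fun c => cond c i j)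
                    = pw A ((altB (!s0) (m' + 1)).map fun c => cond c i j)
                      * pw A ((altB t (r' + 1)).map fun c => cond c i j) := by
                  rw [hsplit, List.map_append, pw_append, hbp s0]
                rw [e1, hblock, hblock2]
                rw [List.map_append, pw_append, List.map_cons, List.map_nil, pw_singleton,
                  List.map_cons, pw_cons]
                rw [List.map_append, pw_append]
                rw [mul_assoc, ← mul_assoc (sg A (cond t i j)), sg_mul_sg h2, one_mul]
              have hDlen : (altB (!s0) m' ++ altB (!t) r').length < n := by
                rw [List.length_append, altB_length, altB_length, ← hBn, ← hCBe, hr']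
                omega
              rcases IH _ hDlen (altB (!s0) m' ++ altB (!t) r') rfl s with h | ⟨B', hB'l, hB'⟩
              · left; rwa [← hDeq, hpwC] at h
              · right
                refine ⟨B', ?_, by rw [hB', ← hDeq, hpwC]⟩
                rw [List.length_append, altB_length, altB_length] at hB'l
                rw [← hCBe, hr']
                omega
  -- apply claim B to a minimal word for u
  obtain ⟨L, hL, hlen, hLu⟩ := ll_spec hu
  set B : List Bool := L.map (fun x => x == i) with hB
  have hmap : (B.map fun c => cond c i j) = L := by
    rw [hB, List.map_map]
    have : ∀ x ∈ L, ((fun c => cond c i j) ∘ fun x => x == i) x = x := by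
      intro x hx
      rcases hL x hx with h | h
      · simp [h]
      · have : x = j := h
        subst this
        have : (x == i) = false := by
          simp only [beq_eq_false_iff_ne, ne_eq]
          exact fun h' => hij h'.symm
        simp [this]
    rw [List.map_congr_left this]
    simp
  rcases claimB B.length B rfl true with ⟨X, Y, hX, hY, heq⟩ | ⟨B', hl, hb⟩
  · rw [hmap, hLu] at heq
    exact ⟨X, Y, hX, hY, heq⟩
  · exfalso
    have hmem : ∀ x ∈ (B'.map fun c => cond c i j), x ∈ ({i, j} : Set I) := by
      intro x hx
      obtain ⟨c, _, rfl⟩ := List.mem_map.mp hx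
      cases c
      · right; rfl
      · left; rfl
    have hlt : ll A {i, j} (u * sg A i) ≤ B'.length := by
      have hh : pw A (B'.map fun c => cond c i j) = u * sg A i := by rw [hb, hmap, hLu]; rfl
      have := ll_le (A := A) hmem hh
      simpa using this
    have hBL : B.length = L.length := by rw [hB, List.length_map]
    omega


/-! ### The main induction: if `ℓ(w sₖ) > ℓ(w)` then `w eₖ ≥ 0` -/

lemma main_pos (h2 : ∀ t, A t t = 2)
    (hr2 : ∀ {i j : I}, i ≠ j → ∀ {u}, u ∈ WS A {i, j} →
      ll A {i, j} u < ll A {i, j} (u * sg A i) →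
      ∃ X Y : ℤ, 0 ≤ X ∧ 0 ≤ Y ∧
        u (Pi.single i 1) = X • Pi.single i 1 + Y • Pi.single j 1) :
    ∀ n w, w ∈ WS A Set.univ → ll A Set.univ w = n →
      ∀ k : I, ll A Set.univ w < ll A Set.univ (w * sg A k) →
      ∀ t, 0 ≤ w (Pi.single k 1) t := by
  intro n
  induction n using Nat.strong_induction_on with
  | _ n IH =>
    intro w hw hn k hk
    rcases Nat.eq_zero_or_pos n with h0 | hpos
    · have hw1 : w = 1 := ll_eq_zero hw (by rw [hn, h0])
      intro t
      rw [hw1, Module.End.one_apply, Pi.single_apply]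
      split <;> norm_num
    · obtain ⟨L, hL, hlen, hLw⟩ := ll_spec hw
      have hLne : L ≠ [] := by
        intro h; rw [h] at hlen; rw [hn] at hlen; simp at hlen; omega
      have hsplit : L = L.dropLast ++ [L.getLast hLne] :=
        (List.dropLast_append_getLast hLne).symm
      set k' := L.getLast hLne with hk'
      set v0 := pw A L.dropLast with hv0
      have hwv0 : w = v0 * sg A k' := by
        rw [← hLw]; conv_lhs => rw [hsplit]
        rw [pw_concat]
      have hv0mem : v0 ∈ WS A Set.univ := ⟨L.dropLast, fun x _ => trivial, rfl⟩
      have hv0len_le : ll A Set.univ v0 ≤ n - 1 := by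
        have h1 := ll_le (A := A) (J := Set.univ) (L := L.dropLast) (w := v0)
          (fun x _ => trivial) hv0.symm
        have h2' : L.dropLast.length = L.length - 1 := by
          rw [List.length_dropLast]
        rw [hn] at hlen
        omega
      have hv0len_ge : n ≤ ll A Set.univ v0 + 1 := by
        have h1 := ll_mul hv0mem (WS_sg (A := A) (Set.mem_univ k'))
        rw [← hwv0, ll_sg h2 (Set.mem_univ k'), hn] at h1
        exact h1
      have hv0len : ll A Set.univ v0 = n - 1 := by omega
      have hwsk' : w * sg A k' = v0 := by
        rw [hwv0, mul_assoc, sg_mul_sg h2, mul_one]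
      have hkk' : k ≠ k' := by
        intro h
        rw [h, hwsk', hn, hv0len] at hk
        omega
      have hkJ : k ∈ ({k, k'} : Set I) := Set.mem_insert k {k'}
      have hk'J : k' ∈ ({k, k'} : Set I) := Set.mem_insert_of_mem k rfl
      -- minimal-length representative of the coset w⟨s_k, s_k'⟩
      set T := {q | ∃ v M, v ∈ WS A Set.univ ∧ (∀ x ∈ M, x ∈ ({k, k'} : Set I)) ∧
          v * pw A M = w ∧ ll A Set.univ v + ll A {k, k'} (pw A M) = n ∧
          ll A Set.univ v = q} with hT
      have hTne : (n - 1) ∈ T := by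
        refine ⟨v0, [k'], hv0mem, ?_, ?_, ?_, hv0len⟩
        · intro x hx
          simp only [List.mem_singleton] at hx
          rw [hx]; exact hk'J
        · rw [pw_singleton, ← hwv0]
        · rw [pw_singleton, hv0len, ll_sg h2 hk'J]
          omega
      obtain ⟨v, M, hvmem, hM, hvMw, hsum, hvq⟩ := Nat.sInf_mem (⟨n - 1, hTne⟩ : T.Nonempty)
      set u := pw A M with hu
      have humem : u ∈ WS A ({k, k'} : Set I) := ⟨M, hM, rfl⟩
      have hvle : ll A Set.univ v ≤ n - 1 := by
        rw [hvq]; exact Nat.sInf_le hTne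
      -- both ascents at v
      have hasc : ∀ s ∈ ({k, k'} : Set I), ll A Set.univ v < ll A Set.univ (v * sg A s) := by
        intro s hs
        rcases ll_dich h2 hvmem (Set.mem_univ s) with h | h
        · omega
        · exfalso
          have hv'mem : v * sg A s ∈ WS A Set.univ := WS_mul hvmem (WS_sg trivial)
          have hps : pw A (s :: M) = sg A s * u := by rw [pw_cons, hu]
          have hnew : ll A Set.univ (v * sg A s) ∈ T := by
            refine ⟨v * sg A s, s :: M, hv'mem, ?_, ?_, ?_, rfl⟩
            · intro x hx
              rcases List.mem_cons.mp hx with hx | hx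
              · rw [hx]; exact hs
              · exact hM x hx
            · rw [hps, ← mul_assoc, mul_assoc v, sg_mul_sg h2, mul_one, hvMw]
            · have hle1 : ll A {k, k'} (pw A (s :: M)) ≤ ll A {k, k'} u + 1 := by
                rw [hps]
                have := ll_mul (WS_sg (A := A) hs) humem
                rw [ll_sg h2 hs] at this
                omega
              have hge1 : n ≤ ll A Set.univ (v * sg A s) + ll A {k, k'} (pw A (s :: M)) := by
                have hw' : w = (v * sg A s) * pw A (s :: M) := by
                  rw [hps, ← mul_assoc, mul_assoc v, sg_mul_sg h2, mul_one, hvMw]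
                have hh1 : ll A Set.univ w ≤ ll A Set.univ (v * sg A s)
                    + ll A Set.univ (pw A (s :: M)) := by
                  rw [hw']
                  exact ll_mul hv'mem ⟨s :: M, fun x _ => trivial, rfl⟩
                have hh2 : ll A Set.univ (pw A (s :: M)) ≤ ll A {k, k'} (pw A (s :: M)) :=
                  ll_mono (fun x _ => trivial) ⟨s :: M, fun x hx => by
                    rcases List.mem_cons.mp hx with hx | hx
                    · rw [hx]; exact hs
                    · exact hM x hx, rfl⟩
                rw [hn] at hh1
                omega
              omega
          have := Nat.sInf_le hnew
          omega
      -- ascent of u at k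
      have huasc : ll A {k, k'} u < ll A {k, k'} (u * sg A k) := by
        rcases ll_dich h2 humem hkJ with h | h
        · omega
        · exfalso
          have huskmem : u * sg A k ∈ WS A ({k, k'} : Set I) := WS_mul humem (WS_sg hkJ)
          have h1 : ll A Set.univ (w * sg A k) ≤ ll A Set.univ v
              + ll A {k, k'} (u * sg A k) := by
            have hw' : w * sg A k = v * (u * sg A k) := by rw [← hvMw, mul_assoc]
            rw [hw']
            calc ll A Set.univ (v * (u * sg A k))
                ≤ ll A Set.univ v + ll A Set.univ (u * sg A k) :=
                  ll_mul hvmem (WS_mono (fun x _ => trivial) huskmem)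
              _ ≤ ll A Set.univ v + ll A {k, k'} (u * sg A k) :=
                  Nat.add_le_add_left (ll_mono (fun x _ => trivial) huskmem) _
          rw [hn] at hk
          omega
      -- rank-2 positivity
      obtain ⟨X, Y, hX, hY, hueq⟩ := hr2 hkk' humem huasc
      have hvlt : ll A Set.univ v < n := by omega
      have hvk := IH (ll A Set.univ v) hvlt v hvmem rfl k (hasc k hkJ)
      have hvk' := IH (ll A Set.univ v) hvlt v hvmem rfl k' (hasc k' hk'J)
      intro t
      have hw' : w = v * u := by rw [← hvMw]
      rw [hw', Module.End.mul_apply, hueq, map_add, map_smul, map_smul]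
      simp only [Pi.add_apply, Pi.smul_apply, smul_eq_mul]
      exact add_nonneg (mul_nonneg hX (hvk t)) (mul_nonneg hY (hvk' t))

/-- Every element of the orbit of a basis vector is componentwise nonneg or nonpos. -/
lemma core_sign (h2 : ∀ t, A t t = 2)
    (hr2 : ∀ {i j : I}, i ≠ j → ∀ {u}, u ∈ WS A {i, j} →
      ll A {i, j} u < ll A {i, j} (u * sg A i) →
      ∃ X Y : ℤ, 0 ≤ X ∧ 0 ≤ Y ∧
        u (Pi.single i 1) = X • Pi.single i 1 + Y • Pi.single j 1)
    (L : List I) (k : I) :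
    (∀ t, 0 ≤ pw A L (Pi.single k 1) t) ∨ (∀ t, pw A L (Pi.single k 1) t ≤ 0) := by
  have hwmem : pw A L ∈ WS A Set.univ := ⟨L, fun x _ => trivial, rfl⟩
  rcases ll_dich h2 hwmem (Set.mem_univ k) with h | h
  · left
    exact main_pos h2 @hr2 _ (pw A L) hwmem rfl k (by omega)
  · right
    have hw'mem : pw A L * sg A k ∈ WS A Set.univ := WS_mul hwmem (WS_sg trivial)
    have hasc : ll A Set.univ (pw A L * sg A k)
        < ll A Set.univ ((pw A L * sg A k) * sg A k) := by
      rw [mul_assoc, sg_mul_sg h2, mul_one]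
      omega
    have hpos := main_pos h2 @hr2 _ (pw A L * sg A k) hw'mem rfl k hasc
    intro t
    have h1 := hpos t
    have hsg : sg A k (Pi.single k 1) = -Pi.single k 1 := by
      rw [sg_apply, prF_single, h2]
      module
    rw [Module.End.mul_apply, hsg, map_neg] at h1
    simp only [Pi.neg_apply] at h1
    omega


/-! ### Rank-2 analysis for crystallographic Cartan matrices of finite type -/

lemma rank2_all (h2 : ∀ t, A t t = 2)
    (hoff : ∀ i j, i ≠ j → A i j ≤ 0)
    (hzero : ∀ i j, i ≠ j → (A i j = 0 ↔ A j i = 0))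
    (hbound : ∀ i j, i ≠ j → A i j * A j i ≤ 3) :
    ∀ {i j : I}, i ≠ j → ∀ {u}, u ∈ WS A {i, j} →
      ll A {i, j} u < ll A {i, j} (u * sg A i) →
      ∃ X Y : ℤ, 0 ≤ X ∧ 0 ≤ Y ∧
        u (Pi.single i 1) = X • Pi.single i 1 + Y • Pi.single j 1 := by
  intro i j hij u hu hasc
  have ha := hoff i j hij
  have hb := hoff j i hij.symm
  have hz := hzero i j hij
  have hd := hbound i j hij
  have hcases : (A i j = 0 ∧ A j i = 0) ∨ (A i j = -1 ∧ A j i = -1) ∨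
      (A i j = -1 ∧ A j i = -2) ∨ (A i j = -2 ∧ A j i = -1) ∨
      (A i j = -1 ∧ A j i = -3) ∨ (A i j = -3 ∧ A j i = -1) := by
    by_cases h0 : A i j = 0
    · exact Or.inl ⟨h0, hz.mp h0⟩
    · have hb0 : A j i ≠ 0 := fun h => h0 (hz.mpr h)
      have ha1 : A i j ≤ -1 := by omega
      have hb1 : A j i ≤ -1 := by omega
      have hprod : 1 ≤ A i j * A j i := by nlinarith
      have hge1 : -3 ≤ A i j := by nlinarith
      have hge2 : -3 ≤ A j i := by nlinarith
      have hone : A i j = -1 ∨ A j i = -1 := by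
        by_contra hcon
        push_neg at hcon
        have h1 : A i j ≤ -2 := by omega
        have h2' : A j i ≤ -2 := by omega
        nlinarith
      rcases hone with h1 | h1
      · rw [h1] at hd ⊢
        have : A j i = -1 ∨ A j i = -2 ∨ A j i = -3 := by omega
        tauto
      · rw [h1] at hd ⊢
        have : A i j = -1 ∨ A i j = -2 ∨ A i j = -3 := by omega
        tauto
  rcases hcases with ⟨ha', hb'⟩ | ⟨ha', hb'⟩ | ⟨ha', hb'⟩ | ⟨ha', hb'⟩ | ⟨ha', hb'⟩ | ⟨ha', hb'⟩
  · refine rank2core h2 hij 2 (by norm_num) ?_ ?_ hu hasc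
    · intro p q z
      obtain ⟨x, y⟩ := z
      rw [ha', hb']
      simp only [altB, run, List.foldr, stp, Bool.not_true, Bool.not_false, if_true,
        Bool.false_eq_true, if_false]
      refine Prod.ext ?_ ?_ <;> simp <;> ring
    · rw [ha', hb']
      decide
  · refine rank2core h2 hij 3 (by norm_num) ?_ ?_ hu hasc
    · intro p q z
      obtain ⟨x, y⟩ := z
      rw [ha', hb']
      simp only [altB, run, List.foldr, stp, Bool.not_true, Bool.not_false, if_true,
        Bool.false_eq_true, if_false]
      refine Prod.ext ?_ ?_ <;> simp <;> ring
    · rw [ha', hb']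
      decide
  · refine rank2core h2 hij 4 (by norm_num) ?_ ?_ hu hasc
    · intro p q z
      obtain ⟨x, y⟩ := z
      rw [ha', hb']
      simp only [altB, run, List.foldr, stp, Bool.not_true, Bool.not_false, if_true,
        Bool.false_eq_true, if_false]
      refine Prod.ext ?_ ?_ <;> simp <;> ring
    · rw [ha', hb']
      decide
  · refine rank2core h2 hij 4 (by norm_num) ?_ ?_ hu hasc
    · intro p q z
      obtain ⟨x, y⟩ := z
      rw [ha', hb']
      simp only [altB, run, List.foldr, stp, Bool.not_true, Bool.not_false, if_true,
        Bool.false_eq_true, if_false]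
      refine Prod.ext ?_ ?_ <;> simp <;> ring
    · rw [ha', hb']
      decide
  · refine rank2core h2 hij 6 (by norm_num) ?_ ?_ hu hasc
    · intro p q z
      obtain ⟨x, y⟩ := z
      rw [ha', hb']
      simp only [altB, run, List.foldr, stp, Bool.not_true, Bool.not_false, if_true,
        Bool.false_eq_true, if_false]
      refine Prod.ext ?_ ?_ <;> simp <;> ring
    · rw [ha', hb']
      decide
  · refine rank2core h2 hij 6 (by norm_num) ?_ ?_ hu hasc
    · intro p q z
      obtain ⟨x, y⟩ := z
      rw [ha', hb']
      simp only [altB, run, List.foldr, stp, Bool.not_true, Bool.not_false, if_true,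
        Bool.false_eq_true, if_false]
      refine Prod.ext ?_ ?_ <;> simp <;> ring
    · rw [ha', hb']
      decide


end Stmt13

open Stmt13

/-- Given a root system `(Y, X, ⟨,⟩, α̌_i, α_i (i ∈ I))` with Weyl group `W`
generated by the reflections `s_i : x ↦ x − ⟨α̌_i, x⟩ α_i`, every element
`β = w(α_i)` of `R = {w(α_i)}` satisfies `β ∈ Σ_i ℕ α_i` or `−β ∈ Σ_i ℕ α_i`. -/
theorem stmt_13 {Y X : Type*} [AddCommGroup Y] [AddCommGroup X]
    [Module.Free ℤ Y] [Module.Finite ℤ Y] [Module.Free ℤ X] [Module.Finite ℤ X]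
    (p : Y →ₗ[ℤ] X →ₗ[ℤ] ℤ)
    (hp : Function.Bijective ⇑p) (hp' : Function.Bijective ⇑p.flip)
    {I : Type*} [Fintype I] [DecidableEq I]
    (coroot : I → Y) (root : I → X)
    (h2 : ∀ i, p (coroot i) (root i) = 2)
    (hoff : ∀ i j, i ≠ j → p (coroot i) (root j) ≤ 0)
    (hpos : ∃ c : I → ℤ, (∀ i, 0 < c i) ∧
      (∀ i j, ((c i * p (coroot i) (root j) : ℤ) : ℝ) =
        ((c j * p (coroot j) (root i) : ℤ) : ℝ)) ∧
      (∀ x : I → ℝ, x ≠ 0 →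
        0 < ∑ i, ∑ j, x i * ((c i * p (coroot i) (root j) : ℤ) : ℝ) * x j))
    (s : I → AddAut X) (hs : ∀ i x, s i x = x - p (coroot i) x • root i) :
    ∀ w ∈ AddSubgroup.closure (Set.range s), ∀ i : I,
      (∃ f : I → ℕ, w (root i) = ∑ j, (f j : ℤ) • root j) ∨
      (∃ f : I → ℕ, -(w (root i)) = ∑ j, (f j : ℤ) • root j) := by
  classical
  obtain ⟨c, hcpos, hsymm, hposd⟩ := hpos
  set A : I → I → ℤ := fun i j => p (coroot i) (root j) with hA
  have h2A : ∀ t, A t t = 2 := h2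
  have hoffA : ∀ i j, i ≠ j → A i j ≤ 0 := hoff
  have hsymZ : ∀ i j, c i * A i j = c j * A j i := by
    intro i j; exact_mod_cast hsymm i j
  have hzero : ∀ i j, i ≠ j → (A i j = 0 ↔ A j i = 0) := by
    intro i j _
    constructor <;> intro h
    · have h1 : c j * A j i = 0 := by rw [← hsymZ i j, h, mul_zero]
      rcases mul_eq_zero.mp h1 with h' | h'
      · exact absurd h' (by have := hcpos j; omega)
      · exact h'
    · have h1 : c i * A i j = 0 := by rw [hsymZ i j, h, mul_zero]
      rcases mul_eq_zero.mp h1 with h' | h'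
      · exact absurd h' (by have := hcpos i; omega)
      · exact h'
  -- boundedness of the off-diagonal products, from positive definiteness
  have hboundZ : ∀ i j, i ≠ j → A i j * A j i ≤ 3 := by
    intro i j hij
    set u : ℝ := -((c i * A i j : ℤ) : ℝ) with hu
    set wv : ℝ := ((2 * c i : ℤ) : ℝ) with hwv
    set x : I → ℝ := fun t => if t = i then u else if t = j then wv else 0 with hx
    have hcine : ((2 * c i : ℤ) : ℝ) ≠ 0 := by
      have := hcpos i
      simp only [ne_eq, Int.cast_eq_zero]
      omega
    have hxne : x ≠ 0 := by
      intro h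
      have h1 := congrFun h j
      have hxj0 : x j = wv := by simp [hx, hij.symm]
      rw [hxj0, Pi.zero_apply] at h1
      exact hcine (hwv ▸ h1)
    have hS := hposd x hxne
    have hxout : ∀ t, t ≠ i → t ≠ j → x t = 0 := by
      intro t h1 h2'; simp [hx, h1, h2']
    have hsum : ∑ t, ∑ r, x t * ((c t * A t r : ℤ) : ℝ) * x r
        = (x i * ((c i * A i i : ℤ) : ℝ) * x i + x i * ((c i * A i j : ℤ) : ℝ) * x j)
          + (x j * ((c j * A j i : ℤ) : ℝ) * x i + x j * ((c j * A j j : ℤ) : ℝ) * x j) := by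
      rw [← Finset.sum_subset (Finset.subset_univ ({i, j} : Finset I))]
      · rw [Finset.sum_pair hij]
        congr 1 <;>
        · rw [← Finset.sum_subset (Finset.subset_univ ({i, j} : Finset I))]
          · rw [Finset.sum_pair hij]
          · intro r _ hr
            simp only [Finset.mem_insert, Finset.mem_singleton, not_or] at hr
            rw [hxout r hr.1 hr.2, mul_zero]
      · intro t _ ht
        simp only [Finset.mem_insert, Finset.mem_singleton, not_or] at ht
        apply Finset.sum_eq_zero
        intro r _
        rw [hxout t ht.1 ht.2, zero_mul, zero_mul]
    rw [hsum] at hS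
    have hxi : x i = u := by simp [hx]
    have hxj : x j = wv := by simp [hx, hij.symm]
    rw [hxi, hxj] at hS
    rw [show c j * A j i = c i * A i j from (hsymZ i j).symm, h2A i, h2A j] at hS
    rw [hu, hwv] at hS
    push_cast at hS
    have hcri : (0 : ℝ) < (c i : ℝ) := by exact_mod_cast hcpos i
    have hcrj : (0 : ℝ) < (c j : ℝ) := by exact_mod_cast hcpos j
    have h8 : (2 * (c i : ℝ)) * (((c i : ℝ) * (A i j : ℝ)) ^ 2)
        < (2 * (c i : ℝ)) * (4 * ((c i : ℝ) * (c j : ℝ))) := by nlinarith [hS]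
    have hkey : ((c i : ℝ) * (A i j : ℝ)) ^ 2 < 4 * ((c i : ℝ) * (c j : ℝ)) :=
      lt_of_mul_lt_mul_left h8 (by positivity)
    have hkeyZ : (c i * A i j) ^ 2 < 4 * (c i * c j) := by exact_mod_cast hkey
    have hsq : (c i * A i j) ^ 2 = (c i * c j) * (A i j * A j i) := by
      linear_combination (c i * A i j) * hsymZ i j
    nlinarith [hkeyZ, hsq, mul_pos (hcpos i) (hcpos j)]
  -- the reflections are involutions
  have hsk2 : ∀ k, s k + s k = 0 := by
    intro k
    apply DFunLike.ext
    intro x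
    rw [AddAut.add_apply, hs, hs]
    have hc : p (coroot k) (x - p (coroot k) x • root k) = - p (coroot k) x := by
      rw [map_sub, map_zsmul, h2, smul_eq_mul]
      ring
    rw [hc, AddAut.zero_apply]
    module
  have hrev : ∀ L : List I, -((L.map s).sum) = (L.reverse.map s).sum := by
    intro L
    induction L with
    | nil => simp
    | cons k L ih =>
        rw [List.map_cons, List.sum_cons, neg_add_rev, ih, List.reverse_cons,
          List.map_append, List.sum_append]
        simp only [List.map_cons, List.map_nil, List.sum_cons, List.sum_nil, add_zero]
        congr 1
        exact neg_eq_of_add_eq_zero_left (hsk2 k)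
  -- every element of the closure is a product of reflections
  have hword : ∀ w ∈ AddSubgroup.closure (Set.range s), ∃ L : List I, w = (L.map s).sum := by
    intro w hw
    induction hw using AddSubgroup.closure_induction with
    | mem x hx =>
        obtain ⟨k, rfl⟩ := hx
        exact ⟨[k], by simp⟩
    | zero => exact ⟨[], by simp⟩
    | add x y _ _ hx hy =>
        obtain ⟨L, rfl⟩ := hx
        obtain ⟨M, rfl⟩ := hy
        exact ⟨L ++ M, by simp⟩
    | neg x _ hx =>
        obtain ⟨L, rfl⟩ := hx
        exact ⟨L.reverse, hrev L⟩
  -- the bridge between the action on X and the coordinate action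
  have hstep : ∀ k (u : I → ℤ), s k (∑ j, u j • root j) = ∑ j, (sg A k u) j • root j := by
    intro k u
    rw [hs]
    have hpv : p (coroot k) (∑ j, u j • root j) = prF A k u := by
      rw [map_sum]
      simp only [map_zsmul, smul_eq_mul]
      rw [prF]
      exact Finset.sum_congr rfl fun j _ => by rw [mul_comm]
    rw [hpv]
    have hterm : ∀ j, (sg A k u) j • root j
        = u j • root j - (if j = k then prF A k u else 0) • root j := by
      intro j
      rw [sg_apply, ← sub_smul]
      congr 1
      simp only [Pi.sub_apply, Pi.smul_apply, Pi.single_apply, smul_eq_mul]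
      split <;> ring
    rw [Finset.sum_congr rfl fun j _ => hterm j, Finset.sum_sub_distrib]
    congr 1
    rw [Finset.sum_eq_single k]
    · simp
    · intro b _ hb
      rw [if_neg hb, zero_smul]
    · intro h; exact absurd (Finset.mem_univ k) h
  have hbridgeX : ∀ (L : List I) (u : I → ℤ),
      ((L.map s).sum : AddAut X) (∑ j, u j • root j) = ∑ j, (pw A L u) j • root j := by
    intro L
    induction L with
    | nil => intro u; simp
    | cons k L ih =>
        intro u
        rw [List.map_cons, List.sum_cons, AddAut.add_apply, ih, hstep, pw_cons,
          Module.End.mul_apply]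
  have hrooteq : ∀ i, root i = ∑ j, ((Pi.single i 1 : I → ℤ)) j • root j := by
    intro i
    rw [Finset.sum_eq_single i]
    · simp
    · intro b _ hb
      have : (Pi.single i 1 : I → ℤ) b = 0 := by
        rw [Pi.single_apply, if_neg hb]
      rw [this, zero_smul]
    · intro h; exact absurd (Finset.mem_univ i) h
  -- assemble
  intro w hw i
  obtain ⟨L, rfl⟩ := hword w hw
  have hval : ((L.map s).sum : AddAut X) (root i)
      = ∑ j, (pw A L (Pi.single i 1)) j • root j := by
    conv_lhs => rw [hrooteq i]
    exact hbridgeX L (Pi.single i 1)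
  rcases core_sign h2A (fun {i j} hij {u} => rank2_all h2A hoffA hzero hboundZ hij) L i
    with hge | hle
  · left
    refine ⟨fun j => (pw A L (Pi.single i 1) j).toNat, ?_⟩
    rw [hval]
    refine Finset.sum_congr rfl fun j _ => ?_
    congr 1
    exact (Int.toNat_of_nonneg (hge j)).symm
  · right
    refine ⟨fun j => (-(pw A L (Pi.single i 1) j)).toNat, ?_⟩
    rw [hval, ← Finset.sum_neg_distrib]
    refine Finset.sum_congr rfl fun j _ => ?_
    rw [← neg_smul]
    congr 1
    exact (Int.toNat_of_nonneg (by have := hle j; omega)).symm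
end

section
/- Let k be an algebraically closed field of characteristic p > 0, let Y be a finitely generated free abelian group, and let 𝔄 : Y → Y be a group homomorphism such that det(𝔄) ≠ 0 and p does not divide det(𝔄). Then the kernel of the endomorphism of k^× ⊗_ℤ Y induced by 𝔄 (sending z ⊗ y to z ⊗ 𝔄(y)) is a finite group of cardinality |det(𝔄)|; in particular its order is prime to p. -/
open scoped TensorProduct

/-- The `d`-torsion of `Additive kˣ` is in bijection with the `|d|`-th roots of unity. -/
noncomputable def aux_torsion_equiv {k : Type*} [Field k] (d : ℤ) :
    {m : Additive kˣ // d • m = 0} ≃ rootsOfUnity d.natAbs k := by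
  refine Equiv.subtypeEquiv Additive.toMul fun m => ?_
  rw [mem_rootsOfUnity]
  have h1 : d • m = 0 ↔ (Additive.toMul m) ^ d = 1 := by
    constructor
    · intro h; simpa [toMul_zsmul] using congrArg Additive.toMul h
    · intro h; apply Additive.toMul.injective; simpa [toMul_zsmul] using h
  rw [h1, ← orderOf_dvd_iff_zpow_eq_one, ← orderOf_dvd_iff_pow_eq_one,
    ← Int.natAbs_dvd_natAbs, Int.natAbs_natCast]

/-- Cardinality of the `d`-torsion of `kˣ` for `k` algebraically closed of characteristic `p`,
when `p ∤ d ≠ 0`. -/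
lemma aux_card_torsion {k : Type*} [Field k] [IsAlgClosed k] (p : ℕ) (_hp : p.Prime) [CharP k p]
    (d : ℤ) (hd : d ≠ 0) (hpd : ¬ (p : ℤ) ∣ d) :
    Nat.card {m : Additive kˣ // d • m = 0} = d.natAbs ∧
      Finite {m : Additive kˣ // d • m = 0} := by
  have hn : d.natAbs ≠ 0 := Int.natAbs_ne_zero.mpr hd
  have : NeZero d.natAbs := ⟨hn⟩
  have hcast : ((d.natAbs : k)) ≠ 0 := by
    rw [Ne, CharP.cast_eq_zero_iff k p]
    intro h
    exact hpd (dvd_trans (Int.natCast_dvd_natCast.mpr h) (Int.natAbs_dvd.mpr dvd_rfl))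
  have : NeZero ((d.natAbs : k)) := ⟨hcast⟩
  have e := aux_torsion_equiv (k := k) d
  refine ⟨?_, Finite.of_equiv _ e.symm⟩
  rw [Nat.card_congr e, HasEnoughRootsOfUnity.natCard_rootsOfUnity k d.natAbs]

/-- Injectivity of an endomorphism of a finite free `ℤ`-module with nonzero determinant. -/
lemma aux_injective {Y : Type*} [AddCommGroup Y] [Module.Free ℤ Y] [Module.Finite ℤ Y]
    (𝔄 : Y →ₗ[ℤ] Y) (hdet : LinearMap.det 𝔄 ≠ 0) : Function.Injective 𝔄 := by
  classical
  set b0 := Module.Free.chooseBasis ℤ Y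
  rw [injective_iff_map_eq_zero]
  intro y hy
  by_contra hy0
  apply hdet
  rw [← LinearMap.det_toMatrix b0]
  rw [← Matrix.exists_mulVec_eq_zero_iff]
  refine ⟨b0.equivFun y, fun h => hy0 ?_, ?_⟩
  · have : b0.equivFun y = b0.equivFun 0 := by simpa using h
    exact b0.equivFun.injective this
  · have := LinearMap.toMatrix_mulVec_repr b0 b0 𝔄 y
    rw [hy] at this
    simpa [Module.Basis.equivFun_apply] using this

/-- Smith normal form for an injective endomorphism of a finite free `ℤ`-module:
there are bases `c'`, `bM` and diagonal entries `a'` with `𝔄 (c' j) = a' j • bM j`,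
whose product has the same absolute value as the determinant. -/
lemma aux_snf {Y : Type*} [AddCommGroup Y] [Module.Free ℤ Y] [Module.Finite ℤ Y]
    (𝔄 : Y →ₗ[ℤ] Y) (hinj : Function.Injective 𝔄) :
    ∃ (c' bM : Module.Basis (Module.Free.ChooseBasisIndex ℤ Y) ℤ Y)
      (a' : Module.Free.ChooseBasisIndex ℤ Y → ℤ),
      (∀ j, 𝔄 (c' j) = a' j • bM j) ∧
      (LinearMap.det 𝔄).natAbs = ∏ j, (a' j).natAbs := by
  classical
  set ι := Module.Free.ChooseBasisIndex ℤ Y with hι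
  obtain ⟨n, snf⟩ := (LinearMap.range 𝔄).smithNormalForm (Module.Free.chooseBasis ℤ Y)
  obtain ⟨bM, bN, f, a, hsnf⟩ := snf
  set e₁ : Y ≃ₗ[ℤ] LinearMap.range 𝔄 := LinearEquiv.ofInjective 𝔄 hinj with he₁
  set c : Module.Basis (Fin n) ℤ Y := bN.map e₁.symm with hc_def
  have hc : ∀ i, 𝔄 (c i) = a i • bM (f i) := by
    intro i
    have h2 : 𝔄 (c i) = (e₁ (c i) : Y) :=
      (LinearEquiv.ofInjective_apply 𝔄 (h := hinj) (c i)).symm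
    rw [h2, hc_def]
    simp only [Module.Basis.map_apply, LinearEquiv.apply_symm_apply]
    exact hsnf i
  have hcard : n = Fintype.card ι := by
    simpa using Fintype.card_congr (c.indexEquiv bM)
  have hbij : Function.Bijective f :=
    (Fintype.bijective_iff_injective_and_card f).2 ⟨f.injective, by simpa using hcard⟩
  set g : Fin n ≃ ι := Equiv.ofBijective f hbij with hg
  refine ⟨c.reindex g, bM, a ∘ g.symm, fun j => ?_, ?_⟩
  · rw [Module.Basis.reindex_apply, hc]
    have : f (g.symm j) = j := g.apply_symm_apply j
    rw [this]
    rfl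
  · set c' : Module.Basis ι ℤ Y := c.reindex g
    set a' : ι → ℤ := a ∘ g.symm
    have hc' : ∀ j, 𝔄 (c' j) = a' j • bM j := by
      intro j
      rw [Module.Basis.reindex_apply, hc]
      have : f (g.symm j) = j := g.apply_symm_apply j
      rw [this]; rfl
    have hmat : LinearMap.toMatrix c' bM 𝔄 = Matrix.diagonal a' := by
      ext i j
      rw [LinearMap.toMatrix_apply, hc' j, map_smul]
      simp only [Matrix.diagonal, Matrix.of_apply, Module.Basis.repr_self, Finsupp.smul_single,
        smul_eq_mul, mul_one, Finsupp.single_apply]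
      by_cases h : i = j
      · subst h; simp
      · simp [h, Ne.symm h]
    have hBc : LinearMap.toMatrix bM bM 𝔄 =
        Matrix.diagonal a' * LinearMap.toMatrix bM c' LinearMap.id := by
      rw [← hmat, ← LinearMap.toMatrix_comp bM c' bM 𝔄 LinearMap.id, LinearMap.comp_id]
    have hunit : (LinearMap.toMatrix bM c' LinearMap.id).det *
        (LinearMap.toMatrix c' bM LinearMap.id).det = 1 := by
      rw [← Matrix.det_mul, ← LinearMap.toMatrix_comp c' bM c' LinearMap.id LinearMap.id,
        LinearMap.comp_id, LinearMap.toMatrix_id]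
      exact Matrix.det_one
    have habs1 : (LinearMap.toMatrix bM c' LinearMap.id).det.natAbs = 1 := by
      have := congrArg Int.natAbs hunit
      rw [Int.natAbs_mul] at this
      exact Nat.eq_one_of_mul_eq_one_right (by simpa using this)
    rw [← LinearMap.det_toMatrix bM, hBc, Matrix.det_mul, Int.natAbs_mul, habs1, mul_one,
      Matrix.det_diagonal]
    exact map_prod Int.natAbsHom a' Finset.univ

/-- The kernel of `lTensor M 𝔄` when `𝔄` is diagonal with respect to a pair of bases. -/
noncomputable def aux_ker_equiv {M Y ι : Type*} [AddCommGroup M] [AddCommGroup Y]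
    [Module.Free ℤ Y] [Module.Finite ℤ Y] [Fintype ι] [DecidableEq ι]
    (𝔄 : Y →ₗ[ℤ] Y) (c' bM : Module.Basis ι ℤ Y) (a' : ι → ℤ)
    (h : ∀ j, 𝔄 (c' j) = a' j • bM j) :
    LinearMap.ker (LinearMap.lTensor M 𝔄) ≃ Π j : ι, {m : M // a' j • m = 0} := by
  let Φ : M ⊗[ℤ] Y ≃ₗ[ℤ] (ι → M) :=
    (LinearEquiv.lTensor M c'.equivFun).trans (TensorProduct.piScalarRight ℤ ℤ M ι)
  let Ψ : M ⊗[ℤ] Y ≃ₗ[ℤ] (ι → M) :=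
    (LinearEquiv.lTensor M bM.equivFun).trans (TensorProduct.piScalarRight ℤ ℤ M ι)
  let D : (ι → M) →ₗ[ℤ] (ι → M) := LinearMap.pi (fun j => a' j • LinearMap.proj j)
  have comm : Ψ.toLinearMap ∘ₗ LinearMap.lTensor M 𝔄 = D ∘ₗ Φ.toLinearMap := by
    refine TensorProduct.ext (LinearMap.ext fun m => c'.ext fun i => ?_)
    change (TensorProduct.piScalarRight ℤ ℤ M ι) (LinearEquiv.lTensor M bM.equivFun (LinearMap.lTensor M 𝔄 (m ⊗ₜ[ℤ] c' i))) = (LinearMap.pi fun j => a' j • (LinearMap.proj j : (ι → M) →ₗ[ℤ] M)) ((TensorProduct.piScalarRight ℤ ℤ M ι) (LinearEquiv.lTensor M c'.equivFun (m ⊗ₜ[ℤ] c' i)))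
    simp only [LinearMap.compr₂_apply, LinearMap.compr₂ₛₗ_apply, TensorProduct.mk_apply, LinearMap.coe_comp,
      LinearEquiv.coe_coe, Function.comp_apply, LinearMap.lTensor_tmul, h i,
      TensorProduct.tmul_smul, map_smul, Ψ, Φ, D]
    simp only [LinearEquiv.trans_apply, LinearEquiv.lTensor_tmul,
      TensorProduct.piScalarRight_apply, TensorProduct.piScalarRightHom_tmul]
    funext j
    simp only [Pi.smul_apply, LinearMap.pi_apply, LinearMap.smul_apply, LinearMap.proj_apply]
    by_cases hij : i = j
    · subst hij; simp [Module.Basis.equivFun_self]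
    · simp [Module.Basis.equivFun_self, hij, Ne.symm hij]
  have key : ∀ x : M ⊗[ℤ] Y, Ψ (LinearMap.lTensor M 𝔄 x) = D (Φ x) :=
    fun x => LinearMap.congr_fun comm x
  refine Equiv.trans (α := _) (β := LinearMap.ker D) ?_ ?_
  · refine ⟨fun x => ⟨Φ x.1, ?_⟩, fun y => ⟨Φ.symm y.1, ?_⟩, fun x => ?_, fun y => ?_⟩
    · rw [LinearMap.mem_ker, ← key, LinearMap.mem_ker.mp x.2, map_zero]
    · rw [LinearMap.mem_ker, ← Ψ.map_eq_zero_iff, key, Φ.apply_symm_apply,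
        LinearMap.mem_ker.mp y.2]
    · exact Subtype.ext (Φ.symm_apply_apply x.1)
    · exact Subtype.ext (Φ.apply_symm_apply y.1)
  · refine ⟨fun v j => ⟨v.1 j, ?_⟩, fun w => ⟨fun j => (w j).1, ?_⟩, fun v => rfl, fun w => rfl⟩
    · have := congrFun (LinearMap.mem_ker.mp v.2) j
      simpa [D] using this
    · rw [LinearMap.mem_ker]
      funext j
      simpa [D] using (w j).2

/-- Let `k` be an algebraically closed field of characteristic `p > 0`,
`Y` a finitely generated free abelian group, and `𝔄 : Y → Y` a homomorphism with
`det(𝔄) ≠ 0` not divisible by `p`. Then the kernel of the endomorphism of `k^× ⊗ Y`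
induced by `𝔄` (sending `z ⊗ y` to `z ⊗ 𝔄(y)`) is a finite group of cardinality
`|det(𝔄)|`; in particular its order is prime to `p`. -/
theorem stmt_16 {k : Type*} [Field k] [IsAlgClosed k] (p : ℕ) (hp : p.Prime) [CharP k p]
    {Y : Type*} [AddCommGroup Y] [Module.Free ℤ Y] [Module.Finite ℤ Y]
    (𝔄 : Y →ₗ[ℤ] Y) (hdet : LinearMap.det 𝔄 ≠ 0) (hpdet : ¬ ((p : ℤ) ∣ LinearMap.det 𝔄)) :
    Finite (LinearMap.ker (LinearMap.lTensor (Additive kˣ) 𝔄)) ∧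
    Nat.card (LinearMap.ker (LinearMap.lTensor (Additive kˣ) 𝔄)) =
      (LinearMap.det 𝔄).natAbs ∧
    ¬ (p ∣ Nat.card (LinearMap.ker (LinearMap.lTensor (Additive kˣ) 𝔄))) := by
  classical
  have hinj : Function.Injective 𝔄 := aux_injective 𝔄 hdet
  obtain ⟨c', bM, a', hc', hprod⟩ := aux_snf 𝔄 hinj
  have E := aux_ker_equiv (M := Additive kˣ) 𝔄 c' bM a' hc'
  -- each diagonal entry is nonzero and prime to p
  have hprod_ne : ∏ j, (a' j).natAbs ≠ 0 := by
    rw [← hprod]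
    exact Int.natAbs_ne_zero.mpr hdet
  have ha_ne : ∀ j, a' j ≠ 0 := by
    intro j hj
    apply hprod_ne
    exact Finset.prod_eq_zero (Finset.mem_univ j) (by simp [hj])
  have hpdet' : ¬ p ∣ (LinearMap.det 𝔄).natAbs := by
    intro hdvd
    exact hpdet (dvd_trans (Int.natCast_dvd_natCast.mpr hdvd) (Int.natAbs_dvd.mpr dvd_rfl))
  have hpa : ∀ j, ¬ (p : ℤ) ∣ a' j := by
    intro j hdvd
    apply hpdet'
    rw [hprod]
    refine dvd_trans ?_ (Finset.dvd_prod_of_mem (fun j => (a' j).natAbs) (Finset.mem_univ j))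
    rw [← Int.natAbs_natCast p]
    exact Int.natAbs_dvd_natAbs.mpr hdvd
  have hfact := fun j => aux_card_torsion (k := k) p hp (a' j) (ha_ne j) (hpa j)
  have hfin : ∀ j, Finite {m : Additive kˣ // a' j • m = 0} := fun j => (hfact j).2
  have : Finite (Π j, {m : Additive kˣ // a' j • m = 0}) := by
    have := hfin; exact Pi.finite
  refine ⟨Finite.of_equiv _ E.symm, ?_, ?_⟩
  · rw [Nat.card_congr E, Nat.card_pi, hprod]
    exact Finset.prod_congr rfl fun j _ => (hfact j).1
  · rw [Nat.card_congr E, Nat.card_pi]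
    intro hdvd
    apply hpdet'
    rw [hprod]
    calc p ∣ ∏ j, Nat.card {m : Additive kˣ // a' j • m = 0} := hdvd
      _ = ∏ j, (a' j).natAbs := Finset.prod_congr rfl fun j _ => (hfact j).1
end
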